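/- arXiv:2201.03198 — 2 statements merged into one kernel-verified Lean document; each statement's English description precedes it below -/
import Mathlib

section
/- (Gallagher's large sieve, q = 1 case) There is an absolute constant C such that for any T > 1 and any sequence of complex numbers (a_n)_{n≥1} with Σ|a_n| < ∞, one has ∫_{−T}^{T} |Σ_n a_n n^{it}|² dt ≤ C·Σ_n (T + n)|a_n|². -/
open Complex intervalIntegral

open Finset MeasureTheory

noncomputable def Krn (T : ℝ) (m n : ℕ) : ℝ :=
  Real.exp (-(T ^ 2 * (Real.log ((m : ℝ) + 1) - Real.log ((n : ℝ) + 1)) ^ 2) / 4)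

lemma Krn_nonneg (T : ℝ) (m n : ℕ) : 0 ≤ Krn T m n := (Real.exp_pos _).le

lemma Krn_le_one (T : ℝ) (m n : ℕ) : Krn T m n ≤ 1 := by
  rw [Krn, show (1:ℝ) = Real.exp 0 by simp]
  apply Real.exp_le_exp.2
  nlinarith [sq_nonneg (T * (Real.log ((m : ℝ) + 1) - Real.log ((n : ℝ) + 1)))]

lemma Krn_symm (T : ℝ) (m n : ℕ) : Krn T m n = Krn T n m := by
  rw [Krn, Krn]; ring_nf

/-- lower bound for |log M - log N| by |M-N|/(2N) when M ≤ 2N. -/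
lemma log_gap {M N : ℝ} (hM : 1 ≤ M) (hN : 1 ≤ N) (h : M ≤ 2 * N) :
    |M - N| / (2 * N) ≤ |Real.log M - Real.log N| := by
  have hM0 : 0 < M := by linarith
  have hN0 : 0 < N := by linarith
  rcases le_total M N with hle | hle
  · have h1 : Real.log (M / N) ≤ M / N - 1 := Real.log_le_sub_one_of_pos (by positivity)
    rw [Real.log_div hM0.ne' hN0.ne'] at h1
    have hlog : Real.log M ≤ Real.log N := Real.log_le_log hM0 hle
    rw [abs_of_nonpos (sub_nonpos.2 hle), abs_of_nonpos (sub_nonpos.2 hlog),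
      div_le_iff₀ (by positivity)]
    have hc : (M/N - 1) * N = M - N := by field_simp
    nlinarith [mul_le_mul_of_nonneg_right h1 hN0.le,
      mul_nonneg (sub_nonneg.2 hlog) hN0.le]
  · have h1 : Real.log (N / M) ≤ N / M - 1 := Real.log_le_sub_one_of_pos (by positivity)
    rw [Real.log_div hN0.ne' hM0.ne'] at h1
    have hlog : Real.log N ≤ Real.log M := Real.log_le_log hN0 hle
    rw [_root_.abs_of_nonneg (sub_nonneg.2 hle), _root_.abs_of_nonneg (sub_nonneg.2 hlog),
      div_le_iff₀ (by positivity)]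
    have hc : (N/M - 1) * M = N - M := by field_simp
    nlinarith [mul_le_mul_of_nonneg_right h1 hM0.le,
      mul_nonneg (sub_nonneg.2 hlog) hM0.le]


lemma nat_dist_cast (m n : ℕ) : (Nat.dist m n : ℝ) = |((m:ℝ)+1) - ((n:ℝ)+1)| := by
  rcases le_total m n with h | h
  · rw [Nat.dist_eq_sub_of_le h, abs_of_nonpos (by push_cast; linarith [(by exact_mod_cast h : ((m:ℕ):ℝ) ≤ (n:ℕ))])]
    push_cast [h]; ring
  · rw [Nat.dist_comm, Nat.dist_eq_sub_of_le h,
      _root_.abs_of_nonneg (by push_cast; linarith [(by exact_mod_cast h : ((n:ℕ):ℝ) ≤ (m:ℕ))])]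
    push_cast [h]; ring

lemma Krn_near {T : ℝ} (hT : 1 < T) {m n : ℕ} (h : (m:ℝ)+1 ≤ 2*((n:ℝ)+1)) :
    Krn T m n ≤ Real.exp 1 * Real.exp ((Nat.dist m n : ℝ) * (-(T / (2 * ((n:ℝ)+1))))) := by
  set M : ℝ := (m:ℝ)+1 with hMdef
  set N : ℝ := (n:ℝ)+1 with hNdef
  have hM : 1 ≤ M := by simp [hMdef]
  have hN : 1 ≤ N := by simp [hNdef]
  have hN0 : 0 < N := by linarith
  have hT0 : 0 < T := by linarith
  set u : ℝ := |Real.log M - Real.log N| with hu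
  clear_value u
  have hgap : |M - N| / (2*N) ≤ u := by rw [hu]; exact log_gap hM hN h
  have h1 : Krn T m n = Real.exp (-(T*u)^2/4) := by
    rw [Krn, ← hMdef, ← hNdef, hu]; congr 1; rw [mul_pow, _root_.sq_abs]
  rw [h1, ← Real.exp_add]
  apply Real.exp_le_exp.2
  have h2 : -(T*u)^2/4 ≤ 1 - T*u := by nlinarith [sq_nonneg (T*u/2 - 1)]
  have h3 : -(T * u) ≤ -(T * (|M - N|/(2*N))) := by
    apply neg_le_neg; exact mul_le_mul_of_nonneg_left hgap hT0.le
  have h4 : (Nat.dist m n : ℝ) * (-(T / (2 * N))) = -(T * (|M - N|/(2*N))) := by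
    rw [nat_dist_cast]; ring
  rw [h4]; linarith

lemma Krn_far {T : ℝ} (hT : 1 < T) {m n : ℕ} (h : 2*((n:ℝ)+1) < (m:ℝ)+1) :
    Krn T m n ≤ 17 * Real.exp 8 / T * (((n:ℝ)+1) / ((m:ℝ)+1))^2 := by
  set M : ℝ := (m:ℝ)+1 with hMdef
  set N : ℝ := (n:ℝ)+1 with hNdef
  have hM : 1 ≤ M := by simp [hMdef]
  have hN : 1 ≤ N := by simp [hNdef]
  have hN0 : 0 < N := by linarith
  have hM0 : 0 < M := by linarith
  have hT0 : 0 < T := by linarith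
  set u : ℝ := Real.log M - Real.log N with hu
  clear_value u
  have hu2 : Real.log 2 ≤ u := by
    rw [hu, ← Real.log_div hM0.ne' hN0.ne']
    apply Real.log_le_log two_pos
    rw [le_div_iff₀ hN0]; linarith
  have hupos : 0 < u := lt_of_lt_of_le (Real.log_pos one_lt_two) hu2
  have hsplit : Krn T m n = Real.exp (-(T^2*u^2)/8) * Real.exp (-(T^2*u^2)/8) := by
    rw [Krn, ← hMdef, ← hNdef, hu, ← Real.exp_add]; congr 1; ring
  rw [hsplit]
  have hl2 : (0.6931471803 : ℝ) < Real.log 2 := Real.log_two_gt_d9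
  have hl2sq : (0.48 : ℝ) ≤ (Real.log 2)^2 := by nlinarith
  -- first factor ≤ 17 / T
  have hb1 : Real.exp (-(T^2*u^2)/8) ≤ 17 / T := by
    have e1 : Real.exp (-(T^2*u^2)/8) ≤ Real.exp (-(T^2*(Real.log 2)^2)/8) := by
      apply Real.exp_le_exp.2
      have h5 : (Real.log 2)^2 ≤ u^2 := by nlinarith
      have := mul_le_mul_of_nonneg_left h5 (sq_nonneg T)
      linarith
    have e2 : Real.exp (-(T^2*(Real.log 2)^2)/8) ≤ 8/(T^2*(Real.log 2)^2) := by
      have key : T^2*(Real.log 2)^2/8 ≤ Real.exp (T^2*(Real.log 2)^2/8) := by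
        linarith [Real.add_one_le_exp (T^2*(Real.log 2)^2/8)]
      calc Real.exp (-(T^2*(Real.log 2)^2)/8)
          = (Real.exp (T^2*(Real.log 2)^2/8))⁻¹ := by
            rw [← Real.exp_neg]; congr 1; ring
        _ ≤ (T^2*(Real.log 2)^2/8)⁻¹ := by
            apply inv_anti₀ (by positivity) key
        _ = 8/(T^2*(Real.log 2)^2) := by rw [inv_div]
    have e3 : 8/(T^2*(Real.log 2)^2) ≤ 17 / T := by
      rw [div_le_div_iff₀ (by positivity) hT0]
      nlinarith [mul_pos hT0 hT0]
    linarith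
  -- second factor ≤ exp 8 * (N/M)^2
  have hb2 : Real.exp (-(T^2*u^2)/8) ≤ Real.exp 8 * (N/M)^2 := by
    have e1 : Real.exp (-(T^2*u^2)/8) ≤ Real.exp (-u^2/8) := by
      apply Real.exp_le_exp.2
      have hT1 : 1*u^2 ≤ T^2*u^2 :=
        mul_le_mul_of_nonneg_right (by nlinarith) (sq_nonneg u)
      linarith
    have e2 : Real.exp (-u^2/8) ≤ Real.exp (8 - 2*u) := by
      apply Real.exp_le_exp.2; nlinarith [sq_nonneg (u - 8)]
    have hMN : Real.exp u = M/N := by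
      rw [hu, Real.exp_sub, Real.exp_log hM0, Real.exp_log hN0]
    have e3 : Real.exp (8 - 2*u) = Real.exp 8 * (N/M)^2 := by
      rw [Real.exp_sub, two_mul, Real.exp_add, hMN]
      rw [div_eq_mul_inv (Real.exp 8)]
      congr 1
      field_simp
    rw [e3] at e2; linarith
  calc Real.exp (-(T^2*u^2)/8) * Real.exp (-(T^2*u^2)/8)
      ≤ (17 / T) * (Real.exp 8 * (N/M)^2) := by
        apply mul_le_mul hb1 hb2 (Real.exp_pos _).le (by positivity)
    _ = 17 * Real.exp 8 / T * (N/M)^2 := by ring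

lemma geom_aux {x : ℝ} (hx : 0 < x) (k : ℕ) :
    ∑ j ∈ Finset.range k, Real.exp (-x) ^ j ≤ 1 + 1/x := by
  have hr0 : (0:ℝ) ≤ Real.exp (-x) := (Real.exp_pos _).le
  have hr1 : Real.exp (-x) < 1 := by rw [Real.exp_lt_one_iff]; linarith
  have h1 : ∑ j ∈ Finset.range k, Real.exp (-x) ^ j ≤ (1 - Real.exp (-x))⁻¹ := by
    rw [← tsum_geometric_of_lt_one hr0 hr1]
    exact Summable.sum_le_tsum _ (fun j _ => pow_nonneg hr0 j) (summable_geometric_of_lt_one hr0 hr1)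
  have he : Real.exp (-x) ≤ 1/(1+x) := by
    rw [Real.exp_neg]
    rw [inv_le_comm₀ (Real.exp_pos _) (by positivity), one_div, inv_inv]
    linarith [Real.add_one_le_exp x]
  have h2 : (1 - Real.exp (-x))⁻¹ ≤ (x/(1+x))⁻¹ := by
    apply inv_anti₀ (by positivity)
    have : x/(1+x) = 1 - 1/(1+x) := by field_simp; ring
    rw [this]; linarith
  have h3 : (x/(1+x))⁻¹ = 1 + 1/x := by
    rw [inv_div]; field_simp; ring
  linarith


lemma Krn_row {T : ℝ} (hT : 1 < T) (n L : ℕ) :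
    ∑ m ∈ Finset.range L, Krn T m n
      ≤ (4*Real.exp 1 + 17*Real.exp 8) * (1 + ((n:ℝ)+1)/T) := by
  classical
  have hT0 : 0 < T := by linarith
  have hN0 : (0:ℝ) < (n:ℝ)+1 := by positivity
  set x : ℝ := T/(2*((n:ℝ)+1)) with hxdef
  have hx0 : 0 < x := by rw [hxdef]; positivity
  have hr0 : (0:ℝ) ≤ Real.exp (-x) := (Real.exp_pos _).le
  have hr1 : Real.exp (-x) ≤ 1 := Real.exp_le_one_iff.2 (by linarith)
  rw [← Finset.sum_filter_add_sum_filter_not (Finset.range L) (fun m => m ≤ 2*n+1)]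
  have hS1 : ∑ m ∈ Finset.range (n+1), Real.exp ((Nat.dist m n : ℝ) * (-x)) ≤ 1 + 1/x := by
    have hc : ∀ m ∈ Finset.range (n+1),
        Real.exp ((Nat.dist m n : ℝ) * (-x)) = Real.exp (-x) ^ (n - m) := by
      intro m hm
      have hmn : m ≤ n := by have := Finset.mem_range.1 hm; omega
      rw [Nat.dist_eq_sub_of_le hmn, ← Real.exp_nat_mul]
    rw [Finset.sum_congr rfl hc]
    have hrefl := Finset.sum_range_reflect (fun j => Real.exp (-x) ^ j) (n+1)
    simp only [Nat.add_sub_cancel] at hrefl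
    calc ∑ m ∈ Finset.range (n+1), Real.exp (-x) ^ (n - m)
        = ∑ j ∈ Finset.range (n+1), Real.exp (-x) ^ j := hrefl
      _ ≤ 1 + 1/x := geom_aux hx0 _
  have hS2 : ∑ m ∈ Finset.Ico (n+1) (2*n+2), Real.exp ((Nat.dist m n : ℝ) * (-x))
      ≤ 1 + 1/x := by
    rw [Finset.sum_Ico_eq_sum_range]
    have h21 : 2*n+2 - (n+1) = n+1 := by omega
    rw [h21]
    calc ∑ j ∈ Finset.range (n+1), Real.exp ((Nat.dist (n+1+j) n : ℝ) * (-x))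
        ≤ ∑ j ∈ Finset.range (n+1), Real.exp (-x) ^ j := by
          apply Finset.sum_le_sum
          intro j _
          have hd : Nat.dist (n+1+j) n = j+1 := by
            rw [Nat.dist_comm, Nat.dist_eq_sub_of_le (by omega)]; omega
          rw [hd, ← Real.exp_nat_mul]
          apply Real.exp_le_exp.2
          push_cast
          nlinarith [mul_nonneg (Nat.cast_nonneg (α := ℝ) j) hx0.le]
      _ ≤ 1 + 1/x := geom_aux hx0 _
  have hA : ∑ m ∈ (Finset.range L).filter (fun m => m ≤ 2*n+1), Krn T m n
      ≤ Real.exp 1 * (2 * (1 + 1/x)) := by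
    calc ∑ m ∈ (Finset.range L).filter (fun m => m ≤ 2*n+1), Krn T m n
        ≤ ∑ m ∈ (Finset.range L).filter (fun m => m ≤ 2*n+1),
            Real.exp 1 * Real.exp ((Nat.dist m n : ℝ) * (-x)) := by
          apply Finset.sum_le_sum
          intro m hm
          have hm2 : m ≤ 2*n+1 := (Finset.mem_filter.1 hm).2
          have hle : (m:ℝ)+1 ≤ 2*((n:ℝ)+1) := by
            have : (m:ℝ) ≤ 2*(n:ℝ)+1 := by exact_mod_cast hm2
            linarith
          simpa [hxdef] using Krn_near hT hle
      _ ≤ ∑ m ∈ Finset.range (2*n+2), Real.exp 1 * Real.exp ((Nat.dist m n : ℝ) * (-x)) := by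
          apply Finset.sum_le_sum_of_subset_of_nonneg
          · intro m hm
            refine Finset.mem_range.2 ?_
            have := (Finset.mem_filter.1 hm).2; omega
          · intro m _ _; positivity
      _ = Real.exp 1 * ∑ m ∈ Finset.range (2*n+2), Real.exp ((Nat.dist m n : ℝ) * (-x)) := by
          rw [Finset.mul_sum]
      _ = Real.exp 1 * ((∑ m ∈ Finset.range (n+1), Real.exp ((Nat.dist m n : ℝ) * (-x)))
          + ∑ m ∈ Finset.Ico (n+1) (2*n+2), Real.exp ((Nat.dist m n : ℝ) * (-x))) := by
          congr 1
          rw [Finset.range_eq_Ico, ← Finset.sum_Ico_consecutive _ (Nat.zero_le (n+1))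
            (by omega : n+1 ≤ 2*n+2), Finset.range_eq_Ico]
      _ ≤ Real.exp 1 * (2 * (1 + 1/x)) := by
          apply mul_le_mul_of_nonneg_left _ (Real.exp_pos 1).le
          linarith
  have hB : ∑ m ∈ (Finset.range L).filter (fun m => ¬ m ≤ 2*n+1), Krn T m n
      ≤ 17*Real.exp 8/T * ((n:ℝ)+1) := by
    have hinv : ∑ m ∈ (Finset.range L).filter (fun m => ¬ m ≤ 2*n+1), (((m:ℝ)+1)^2)⁻¹
        ≤ 1/((n:ℝ)+1) := by
      have him : ∑ m ∈ (Finset.range L).filter (fun m => ¬ m ≤ 2*n+1), (((m:ℝ)+1)^2)⁻¹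
          = ∑ i ∈ ((Finset.range L).filter (fun m => ¬ m ≤ 2*n+1)).image (fun m => m+1),
              (((i:ℕ):ℝ)^2)⁻¹ := by
        rw [Finset.sum_image (by intro a _ b _ hab; simp only at hab; omega)]
        apply Finset.sum_congr rfl; intro m _; push_cast; ring_nf
      rw [him]
      calc ∑ i ∈ ((Finset.range L).filter (fun m => ¬ m ≤ 2*n+1)).image (fun m => m+1),
              (((i:ℕ):ℝ)^2)⁻¹
          ≤ ∑ i ∈ Finset.Ioo (2*n+2) (L+1), (((i:ℕ):ℝ)^2)⁻¹ := by
            apply Finset.sum_le_sum_of_subset_of_nonneg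
            · intro i hi
              obtain ⟨m, hm, rfl⟩ := Finset.mem_image.1 hi
              have h1 := Finset.mem_range.1 (Finset.mem_filter.1 hm).1
              have h2 := (Finset.mem_filter.1 hm).2
              exact Finset.mem_Ioo.2 (by omega)
            · intro i _ _; positivity
        _ ≤ 2/(2*(n:ℝ)+3) := by
            have h := sum_Ioo_inv_sq_le (α := ℝ) (2*n+2) (L+1)
            push_cast at h ⊢
            rw [show (2*(n:ℝ)+2+1) = 2*(n:ℝ)+3 by ring] at h
            exact h
        _ ≤ 1/((n:ℝ)+1) := by
            rw [div_le_div_iff₀ (by positivity) hN0]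
            linarith
    calc ∑ m ∈ (Finset.range L).filter (fun m => ¬ m ≤ 2*n+1), Krn T m n
        ≤ ∑ m ∈ (Finset.range L).filter (fun m => ¬ m ≤ 2*n+1),
            17*Real.exp 8/T * (((n:ℝ)+1)/((m:ℝ)+1))^2 := by
          apply Finset.sum_le_sum
          intro m hm
          have hm2 : ¬ m ≤ 2*n+1 := (Finset.mem_filter.1 hm).2
          apply Krn_far hT
          have : (2*n+2 : ℝ) ≤ (m:ℝ) := by exact_mod_cast Nat.le_of_lt_succ (by omega)
          linarith
      _ = 17*Real.exp 8/T * ((n:ℝ)+1)^2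
            * ∑ m ∈ (Finset.range L).filter (fun m => ¬ m ≤ 2*n+1), (((m:ℝ)+1)^2)⁻¹ := by
          rw [mul_assoc, Finset.mul_sum, Finset.mul_sum]
          apply Finset.sum_congr rfl
          intro m _
          rw [div_pow]; ring
      _ ≤ 17*Real.exp 8/T * ((n:ℝ)+1)^2 * (1/((n:ℝ)+1)) := by
          apply mul_le_mul_of_nonneg_left hinv (by positivity)
      _ = 17*Real.exp 8/T * ((n:ℝ)+1) := by
          field_simp
  have h1x : 1/x = 2*((n:ℝ)+1)/T := by rw [hxdef, one_div_div]
  have hNT : (0:ℝ) ≤ ((n:ℝ)+1)/T := by positivity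
  have := add_le_add hA hB
  rw [h1x] at this
  calc _ ≤ Real.exp 1 * (2 * (1 + 2*((n:ℝ)+1)/T)) + 17*Real.exp 8/T * ((n:ℝ)+1) := this
    _ ≤ (4*Real.exp 1 + 17*Real.exp 8) * (1 + ((n:ℝ)+1)/T) := by
        have e1 : (0:ℝ) < Real.exp 1 := Real.exp_pos 1
        have e8 : (0:ℝ) < Real.exp 8 := Real.exp_pos 8
        have hq : 17*Real.exp 8/T * ((n:ℝ)+1) = 17*Real.exp 8 * (((n:ℝ)+1)/T) := by ring
        rw [hq]
        ring_nf
        nlinarith [mul_nonneg e1.le hNT, mul_nonneg e8.le hNT, e1, e8]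

lemma Krn_summable {T : ℝ} (hT : 1 < T) (n : ℕ) : Summable (fun m => Krn T m n) :=
  summable_of_sum_range_le (fun m => Krn_nonneg T m n) (fun L => Krn_row hT n L)

lemma Krn_tsum_le {T : ℝ} (hT : 1 < T) (n : ℕ) :
    ∑' m, Krn T m n ≤ (4*Real.exp 1 + 17*Real.exp 8) * (1 + ((n:ℝ)+1)/T) :=
  Real.tsum_le_of_sum_range_le (fun m => Krn_nonneg T m n) (fun L => Krn_row hT n L)

lemma gauss_ft {T : ℝ} (hT : 0 < T) (θ : ℝ) :
    ∫ t : ℝ, ((Real.exp (-(T^2)⁻¹ * t^2) : ℝ) : ℂ) * Complex.exp (Complex.I * θ * t)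
      = ((Real.sqrt Real.pi * T * Real.exp (-(T^2 * θ^2)/4) : ℝ) : ℂ) := by
  have hb : (0:ℝ) < ((T^2)⁻¹) := by positivity
  have h := fourierIntegral_gaussian (b := (((T^2)⁻¹ : ℝ) : ℂ))
      (show 0 < ((((T^2)⁻¹ : ℝ) : ℂ)).re by rw [Complex.ofReal_re]; positivity) ((θ:ℝ) : ℂ)
  have hint : ∀ t : ℝ, ((Real.exp (-(T^2)⁻¹ * t^2) : ℝ) : ℂ) * Complex.exp (Complex.I * θ * t)
      = Complex.exp (Complex.I * θ * t) * Complex.exp (-(((T^2)⁻¹:ℝ):ℂ) * (t:ℂ)^2) := by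
    intro t
    rw [mul_comm]
    congr 2
    push_cast
    ring
  simp only [hint]
  rw [h]
  have h1 : ((Real.pi : ℂ)) / (((T^2)⁻¹:ℝ):ℂ) = ((Real.pi * T^2 : ℝ) : ℂ) := by
    push_cast
    field_simp
  rw [h1]
  have h2 : ((Real.pi * T^2 : ℝ):ℂ) ^ ((1:ℂ)/2) = ((Real.sqrt (Real.pi*T^2) : ℝ) : ℂ) := by
    rw [show ((1:ℂ)/2) = (((1/2 : ℝ)) : ℂ) by norm_num,
      ← Complex.ofReal_cpow (by positivity), Real.sqrt_eq_rpow]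
  have h3 : -((θ:ℝ):ℂ)^2/(4 * (((T^2)⁻¹:ℝ):ℂ)) = ((-(T^2*θ^2)/4 : ℝ) : ℂ) := by
    have hT2 : ((T:ℂ))^2 ≠ 0 := by
      simpa using pow_ne_zero 2 (by exact_mod_cast hT.ne' : (T:ℂ) ≠ 0)
    push_cast
    field_simp
  rw [h2, h3, ← Complex.ofReal_exp, ← Complex.ofReal_mul]
  congr 1
  rw [Real.sqrt_mul Real.pi_nonneg, Real.sqrt_sq hT.le]

open MeasureTheory


section KrnSummability

variable {T : ℝ} (hT : 1 < T) (a : ℕ → ℂ)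
  (hwa : Summable (fun n : ℕ => (T + ((n : ℝ) + 1)) * ‖a n‖ ^ 2))

include hT in
lemma hrowB_lem (n : ℕ) : ∑' m, ‖a n‖^2 * Krn T m n
    ≤ (4*Real.exp 1 + 17*Real.exp 8)/T * ((T + ((n:ℝ)+1)) * ‖a n‖^2) := by
  have hT0 : 0 < T := by linarith
  rw [tsum_mul_left]
  calc ‖a n‖^2 * ∑' m, Krn T m n
      ≤ ‖a n‖^2 * ((4*Real.exp 1 + 17*Real.exp 8) * (1 + ((n:ℝ)+1)/T)) :=
        mul_le_mul_of_nonneg_left (Krn_tsum_le hT n) (by positivity)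
    _ = (4*Real.exp 1 + 17*Real.exp 8)/T * ((T + ((n:ℝ)+1)) * ‖a n‖^2) := by
        field_simp

include hT hwa in
lemma hrowS_lem : Summable (fun n => ∑' m, ‖a n‖^2 * Krn T m n) := by
  apply Summable.of_nonneg_of_le
    (fun n => tsum_nonneg fun m => mul_nonneg (sq_nonneg _) (Krn_nonneg T m n))
    (fun n => hrowB_lem hT a n) (hwa.mul_left ((4*Real.exp 1 + 17*Real.exp 8)/T))

include hT hwa in
set_option maxHeartbeats 1000000 in
lemma hbase_lem : Summable (fun q : ℕ × ℕ => ‖a q.1‖^2 * Krn T q.2 q.1) := by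
  have h := summable_prod_of_nonneg
    (f := fun q : ℕ × ℕ => ‖a q.1‖^2 * Krn T q.2 q.1)
    (fun q => mul_nonneg (sq_nonneg _) (Krn_nonneg T q.2 q.1))
  apply h.2
  refine ⟨fun n => ?_, ?_⟩
  · show Summable fun m => ‖a n‖^2 * Krn T m n
    exact (Krn_summable hT n).mul_left _
  · show Summable fun n => ∑' m, ‖a n‖^2 * Krn T m n
    exact hrowS_lem hT a hwa

include hT hwa in
lemma hP1_lem : Summable (fun p : ℕ × ℕ => ‖a p.1‖^2 * Krn T p.1 p.2) :=
  (hbase_lem hT a hwa).congr (fun q => by rw [Krn_symm])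

include hT hwa in
lemma hP2_lem : Summable (fun p : ℕ × ℕ => ‖a p.2‖^2 * Krn T p.1 p.2) :=
  ((hbase_lem hT a hwa).prod_symm).congr (fun p => by simp)

lemma hamgm_lem (p : ℕ × ℕ) : ‖a p.1‖ * ‖a p.2‖ * Krn T p.1 p.2
    ≤ (‖a p.1‖^2 * Krn T p.1 p.2 + ‖a p.2‖^2 * Krn T p.1 p.2)/2 := by
  nlinarith [mul_nonneg (sq_nonneg (‖a p.1‖ - ‖a p.2‖)) (Krn_nonneg T p.1 p.2)]

include hT hwa in
lemma hPs_lem : Summable (fun p : ℕ × ℕ => ‖a p.1‖ * ‖a p.2‖ * Krn T p.1 p.2) :=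
  Summable.of_nonneg_of_le (fun p => mul_nonneg (mul_nonneg (norm_nonneg _)
      (norm_nonneg _)) (Krn_nonneg T p.1 p.2)) (hamgm_lem a)
    (((hP1_lem hT a hwa).add (hP2_lem hT a hwa)).div_const 2)

include hT hwa in
lemma htsumP_lem : ∑' p : ℕ × ℕ, ‖a p.1‖ * ‖a p.2‖ * Krn T p.1 p.2
    ≤ (4*Real.exp 1 + 17*Real.exp 8)/T * ∑' n : ℕ, (T + ((n:ℝ)+1)) * ‖a n‖^2 := by
  have hP1 := hP1_lem hT a hwa
  have hP2 := hP2_lem hT a hwa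
  have step1 : ∑' p : ℕ × ℕ, ‖a p.1‖ * ‖a p.2‖ * Krn T p.1 p.2 ≤ ∑' p : ℕ × ℕ,
      (‖a p.1‖^2 * Krn T p.1 p.2 + ‖a p.2‖^2 * Krn T p.1 p.2)/2 :=
    Summable.tsum_le_tsum (hamgm_lem a) (hPs_lem hT a hwa) ((hP1.add hP2).div_const 2)
  have step2 : ∑' p : ℕ × ℕ,
      (‖a p.1‖^2 * Krn T p.1 p.2 + ‖a p.2‖^2 * Krn T p.1 p.2)/2
      = ((∑' p : ℕ × ℕ, ‖a p.1‖^2 * Krn T p.1 p.2)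
        + ∑' p : ℕ × ℕ, ‖a p.2‖^2 * Krn T p.1 p.2)/2 := by
    rw [← Summable.tsum_add hP1 hP2, tsum_div_const]
  have step3 : ∑' p : ℕ × ℕ, ‖a p.1‖^2 * Krn T p.1 p.2
      = ∑' p : ℕ × ℕ, ‖a p.2‖^2 * Krn T p.1 p.2 := by
    rw [← (Equiv.prodComm ℕ ℕ).tsum_eq (fun p : ℕ × ℕ => ‖a p.2‖^2 * Krn T p.1 p.2)]
    exact tsum_congr (fun q => by
      show ‖a q.1‖^2 * Krn T q.1 q.2 = ‖a q.1‖^2 * Krn T q.2 q.1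
      rw [Krn_symm])
  have step4 : ∑' p : ℕ × ℕ, ‖a p.2‖^2 * Krn T p.1 p.2
      ≤ (4*Real.exp 1 + 17*Real.exp 8)/T * ∑' n : ℕ, (T + ((n:ℝ)+1)) * ‖a n‖^2 := by
    have e1 : ∑' p : ℕ × ℕ, ‖a p.2‖^2 * Krn T p.1 p.2
        = ∑' q : ℕ × ℕ, ‖a q.1‖^2 * Krn T q.2 q.1 := by
      rw [← (Equiv.prodComm ℕ ℕ).tsum_eq (fun p : ℕ × ℕ => ‖a p.2‖^2 * Krn T p.1 p.2)]
      exact tsum_congr (fun q => by simp)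
    rw [e1, Summable.tsum_prod (hbase_lem hT a hwa)]
    calc ∑' (n : ℕ), ∑' (m : ℕ), ‖a n‖^2 * Krn T m n
        ≤ ∑' n : ℕ, (4*Real.exp 1 + 17*Real.exp 8)/T * ((T + ((n:ℝ)+1)) * ‖a n‖^2) :=
          Summable.tsum_le_tsum (hrowB_lem hT a) (hrowS_lem hT a hwa)
            (hwa.mul_left ((4*Real.exp 1 + 17*Real.exp 8)/T))
      _ = (4*Real.exp 1 + 17*Real.exp 8)/T * ∑' n : ℕ, (T + ((n:ℝ)+1)) * ‖a n‖^2 :=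
          tsum_mul_left
  calc ∑' p : ℕ × ℕ, ‖a p.1‖ * ‖a p.2‖ * Krn T p.1 p.2 ≤ _ := step1
    _ = _ := step2
    _ ≤ (4*Real.exp 1 + 17*Real.exp 8)/T * ∑' n : ℕ, (T + ((n:ℝ)+1)) * ‖a n‖^2 := by
        rw [step3]
        linarith [step4]

end KrnSummability

set_option maxHeartbeats 1000000 in
/-- Gallagher's large sieve inequality (case `q = 1`): there is an absolute
constant `C` such that for all `T > 1` and all complex sequences `(a_n)_{n ≥ 1}`
with `∑ |a_n| < ∞` (and with `∑ (T + n)|a_n|²` finite),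
`∫_{-T}^{T} |∑_n a_n n^{it}|² dt ≤ C ∑_n (T + n)|a_n|²`.
Here `a n` stands for the coefficient attached to the integer `n + 1`. -/
theorem gallagher_large_sieve :
    ∃ C : ℝ, 0 < C ∧ ∀ T : ℝ, 1 < T → ∀ a : ℕ → ℂ,
      Summable (fun n : ℕ => ‖a n‖) →
      Summable (fun n : ℕ => (T + ((n : ℝ) + 1)) * ‖a n‖ ^ 2) →
      (∫ t in (-T)..T, ‖∑' n : ℕ, a n * ((n : ℂ) + 1) ^ ((t : ℂ) * Complex.I)‖ ^ 2) ≤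
        C * ∑' n : ℕ, (T + ((n : ℝ) + 1)) * ‖a n‖ ^ 2 := by
  classical
  refine ⟨Real.exp 1 * Real.sqrt Real.pi * (4*Real.exp 1 + 17*Real.exp 8), by positivity, ?_⟩
  intro T hT a ha hwa
  have hT0 : 0 < T := by linarith
  have hb : (0:ℝ) < (T^2)⁻¹ := by positivity
  set C0 : ℝ := 4*Real.exp 1 + 17*Real.exp 8 with hC0
  have hC00 : 0 < C0 := by rw [hC0]; positivity
  set lg : ℕ → ℝ := fun n => Real.log ((n:ℝ)+1) with hlg
  set g : ℕ → ℝ → ℂ := fun n t => a n * Complex.exp (Complex.I * ((lg n : ℝ) : ℂ) * ((t:ℝ) : ℂ))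
    with hg
  set S : ℝ → ℂ := fun t => ∑' n, g n t with hS
  set w : ℝ → ℝ := fun t => Real.exp (-(T^2)⁻¹ * t^2) with hw
  -- rewrite the integrand
  have hterm : ∀ (t : ℝ) (n : ℕ), a n * ((n : ℂ) + 1) ^ ((t : ℂ) * Complex.I) = g n t := by
    intro t n
    have hb0 : ((n:ℂ) + 1) = ((((n:ℝ)+1) : ℝ) : ℂ) := by push_cast; ring
    have hne : ((n:ℂ) + 1) ≠ 0 := by
      rw [hb0]; exact_mod_cast (by positivity : ((n:ℝ)+1) ≠ 0)
    rw [hg, Complex.cpow_def_of_ne_zero hne]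
    congr 1
    rw [hb0, ← Complex.ofReal_log (by positivity : (0:ℝ) ≤ (n:ℝ)+1)]
    rw [hlg]
    ring
  have hnorm : ∀ (t : ℝ) (n : ℕ), ‖g n t‖ = ‖a n‖ := by
    intro t n
    rw [hg]
    have hre : (Complex.I * ((lg n : ℝ) : ℂ) * ((t:ℝ) : ℂ)).re = 0 := by simp
    rw [norm_mul, Complex.norm_exp, hre, Real.exp_zero,
      mul_one]
  have hgs : ∀ t : ℝ, Summable (fun n => g n t) := by
    intro t
    apply Summable.of_norm
    exact ha.congr (fun n => (hnorm t n).symm)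
  have hgs' : ∀ t : ℝ, Summable (fun n => ‖g n t‖) :=
    fun t => ha.congr (fun n => (hnorm t n).symm)
  have hgc : ∀ n, Continuous (fun t => g n t) := by
    intro n
    exact continuous_const.mul ((continuous_const.mul Complex.continuous_ofReal).cexp)
  have hScont : Continuous S := continuous_tsum hgc ha (fun n t => (hnorm t n).le)
  set B : ℝ := ∑' n, ‖a n‖ with hB
  have hB0 : 0 ≤ B := tsum_nonneg (fun n => norm_nonneg _)
  have hSb : ∀ t, ‖S t‖ ≤ B := by
    intro t
    rw [hS]
    calc ‖∑' n, g n t‖ ≤ ∑' n, ‖g n t‖ := norm_tsum_le_tsum_norm (hgs' t)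
      _ = B := by rw [hB]; exact tsum_congr (fun n => hnorm t n)
  have hwc : Continuous w := Real.continuous_exp.comp (continuous_const.mul (continuous_pow 2))
  have hw_int : Integrable w := integrable_exp_neg_mul_sq hb
  have hw_nonneg : ∀ t, 0 ≤ w t := fun t => (Real.exp_pos _).le
  have hwS_int : Integrable (fun t => w t * ‖S t‖^2) := by
    apply Integrable.mono' (hw_int.const_mul (B^2))
    · exact (hwc.mul ((hScont.norm).pow 2)).aestronglyMeasurable
    · filter_upwards with t
      rw [Real.norm_of_nonneg (by positivity)]
      have h1 : ‖S t‖^2 ≤ B^2 := by nlinarith [norm_nonneg (S t), hSb t]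
      calc w t * ‖S t‖^2 ≤ w t * B^2 := by nlinarith [hw_nonneg t]
        _ = B^2 * w t := by ring
  -- Step A : interval integral bounded by e * full weighted integral
  have stepA : (∫ t in (-T)..T, ‖S t‖ ^ 2)
      ≤ Real.exp 1 * ∫ t : ℝ, w t * ‖S t‖^2 := by
    have hmono : (∫ t in (-T)..T, ‖S t‖ ^ 2)
        ≤ ∫ t in (-T)..T, Real.exp 1 * (w t * ‖S t‖^2) := by
      apply intervalIntegral.integral_mono_on (by linarith : -T ≤ T)
      · exact ((hScont.norm).pow 2).intervalIntegrable _ _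
      · exact (continuous_const.mul (hwc.mul ((hScont.norm).pow 2))).intervalIntegrable _ _
      · intro t ht
        obtain ⟨ht1, ht2⟩ := ht
        have ht3 : t^2 ≤ T^2 := by nlinarith
        have h4 : (T^2)⁻¹ * t^2 ≤ 1 := by
          calc (T^2)⁻¹ * t^2 ≤ (T^2)⁻¹ * T^2 := by
                apply mul_le_mul_of_nonneg_left ht3 (by positivity)
            _ = 1 := by field_simp
        have h5 : (1:ℝ) ≤ Real.exp 1 * w t := by
          rw [hw, ← Real.exp_add]
          calc (1:ℝ) = Real.exp 0 := Real.exp_zero.symm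
            _ ≤ _ := Real.exp_le_exp.2 (by linarith)
        calc ‖S t‖^2 = 1 * ‖S t‖^2 := by ring
          _ ≤ (Real.exp 1 * w t) * ‖S t‖^2 := by
              apply mul_le_mul_of_nonneg_right h5 (by positivity)
          _ = Real.exp 1 * (w t * ‖S t‖^2) := by ring
    have hsplit : (∫ t in (-T)..T, Real.exp 1 * (w t * ‖S t‖^2))
        = Real.exp 1 * ∫ t in (-T)..T, w t * ‖S t‖^2 :=
      intervalIntegral.integral_const_mul _ _
    have hset : (∫ t in (-T)..T, w t * ‖S t‖^2) ≤ ∫ t : ℝ, w t * ‖S t‖^2 := by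
      rw [intervalIntegral.integral_of_le (by linarith : -T ≤ T)]
      apply setIntegral_le_integral hwS_int
      filter_upwards with t
      positivity
    calc (∫ t in (-T)..T, ‖S t‖ ^ 2) ≤ _ := hmono
      _ = _ := hsplit
      _ ≤ Real.exp 1 * ∫ t : ℝ, w t * ‖S t‖^2 := by
          apply mul_le_mul_of_nonneg_left hset (Real.exp_pos 1).le
  -- the doubly-indexed family
  set F : ℕ × ℕ → ℝ → ℂ :=
    fun p t => ((w t : ℝ) : ℂ) * (g p.1 t * (starRingEnd ℂ) (g p.2 t)) with hF
  have hprod : ∀ t : ℝ, ∑' p : ℕ × ℕ, F p t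
      = ((w t : ℝ) : ℂ) * (S t * (starRingEnd ℂ) (S t)) := by
    intro t
    have hconj : (starRingEnd ℂ) (S t) = ∑' n, (starRingEnd ℂ) (g n t) := by
      rw [hS]; exact tsum_star
    have hmul : S t * (starRingEnd ℂ) (S t)
        = ∑' p : ℕ × ℕ, g p.1 t * (starRingEnd ℂ) (g p.2 t) := by
      rw [hS, hconj]
      apply tsum_mul_tsum_of_summable_norm (hgs' t)
      exact (hgs' t).congr (fun n => by rw [RCLike.norm_conj])
    rw [hmul]
    exact tsum_mul_left
  -- pointwise form of F
  have hFpoint : ∀ (p : ℕ × ℕ) (t : ℝ), F p t = (a p.1 * (starRingEnd ℂ) (a p.2)) *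
      (((w t : ℝ):ℂ) * Complex.exp (Complex.I * ((lg p.1 - lg p.2 : ℝ):ℂ) * ((t:ℝ):ℂ))) := by
    intro p t
    have hcg : (starRingEnd ℂ) (Complex.exp (Complex.I * ((lg p.2 : ℝ):ℂ) * ((t:ℝ):ℂ)))
        = Complex.exp (-(Complex.I * ((lg p.2 : ℝ):ℂ) * ((t:ℝ):ℂ))) := by
      rw [← Complex.exp_conj]
      congr 1
      simp [map_mul, Complex.conj_I, Complex.conj_ofReal]
    have hexp : Complex.exp (Complex.I * ((lg p.1 : ℝ):ℂ) * ((t:ℝ):ℂ))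
        * Complex.exp (-(Complex.I * ((lg p.2 : ℝ):ℂ) * ((t:ℝ):ℂ)))
        = Complex.exp (Complex.I * ((lg p.1 - lg p.2 : ℝ):ℂ) * ((t:ℝ):ℂ)) := by
      rw [← Complex.exp_add]
      congr 1
      push_cast
      ring
    rw [hF, hg]
    simp only [map_mul, hcg]
    rw [← hexp]
    ring
  have hFnormval : ∀ (p : ℕ × ℕ) (t : ℝ), ‖F p t‖ = (‖a p.1‖ * ‖a p.2‖) * w t := by
    intro p t
    rw [hF, norm_mul, norm_mul, RCLike.norm_conj, hnorm, hnorm,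
      Complex.norm_real, Real.norm_of_nonneg (hw_nonneg t)]
    ring
  have hFint : ∀ p, Integrable (F p) := by
    intro p
    apply Integrable.mono' (hw_int.const_mul (‖a p.1‖ * ‖a p.2‖))
    · apply Continuous.aestronglyMeasurable
      exact (Complex.continuous_ofReal.comp hwc).mul ((hgc p.1).mul ((hgc p.2).star))
    · filter_upwards with t
      rw [hFnormval]
  have hFnorm_sum : Summable (fun p : ℕ × ℕ => ∫ t, ‖F p t‖) := by
    apply Summable.congr (f := fun p : ℕ × ℕ => (‖a p.1‖ * ‖a p.2‖) * ∫ t, w t)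
    · exact (ha.mul_of_nonneg ha (fun n => norm_nonneg _) (fun n => norm_nonneg _)).mul_right _
    · intro p
      rw [← MeasureTheory.integral_const_mul]
      exact integral_congr_ae (Filter.Eventually.of_forall (fun t => (hFnormval p t).symm))
  have hswap : (∫ t : ℝ, (∑' p : ℕ × ℕ, F p t)) = ∑' p : ℕ × ℕ, ∫ t, F p t :=
    (integral_tsum_of_summable_integral_norm hFint hFnorm_sum).symm
  set P : ℕ × ℕ → ℝ := fun p => ‖a p.1‖ * ‖a p.2‖ * Krn T p.1 p.2 with hP
  have hFint_val : ∀ p : ℕ × ℕ, ‖∫ t, F p t‖ = Real.sqrt Real.pi * T * P p := by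
    intro p
    have hval : (∫ t, F p t) = (a p.1 * (starRingEnd ℂ) (a p.2)) *
        ((Real.sqrt Real.pi * T
          * Real.exp (-(T^2 * (lg p.1 - lg p.2)^2)/4) : ℝ) : ℂ) := by
      calc (∫ t, F p t)
          = ∫ t, (a p.1 * (starRingEnd ℂ) (a p.2)) *
            (((w t : ℝ):ℂ) * Complex.exp (Complex.I * ((lg p.1 - lg p.2 : ℝ):ℂ) * ((t:ℝ):ℂ))) :=
            integral_congr_ae (Filter.Eventually.of_forall (fun t => hFpoint p t))
        _ = (a p.1 * (starRingEnd ℂ) (a p.2)) *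
            ∫ t : ℝ, (((w t : ℝ):ℂ)
              * Complex.exp (Complex.I * ((lg p.1 - lg p.2 : ℝ):ℂ) * ((t:ℝ):ℂ))) :=
            MeasureTheory.integral_const_mul _ _
        _ = _ := by rw [hw, gauss_ft hT0 (lg p.1 - lg p.2)]
    rw [hval, norm_mul, norm_mul, RCLike.norm_conj, Complex.norm_real,
      Real.norm_of_nonneg (mul_nonneg (mul_nonneg (Real.sqrt_nonneg _) hT0.le)
        (Real.exp_pos _).le), hP]
    simp only [Krn]
    ring
  have hPs : Summable P := hPs_lem hT a hwa
  have htsumP : ∑' p : ℕ × ℕ, P p ≤ C0/T * ∑' n : ℕ, (T + ((n:ℝ)+1)) * ‖a n‖^2 :=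
    htsumP_lem hT a hwa
  -- complex-valued integrand is integrable
  have hcplx_int : Integrable (fun t => ((w t : ℝ):ℂ) * (S t * (starRingEnd ℂ) (S t))) := by
    apply Integrable.mono' (hw_int.const_mul (B^2))
    · apply Continuous.aestronglyMeasurable
      exact (Complex.continuous_ofReal.comp hwc).mul (hScont.mul hScont.star)
    · filter_upwards with t
      rw [norm_mul, norm_mul, RCLike.norm_conj, Complex.norm_real,
        Real.norm_of_nonneg (hw_nonneg t)]
      have h1 : ‖S t‖ * ‖S t‖ ≤ B^2 := by nlinarith [norm_nonneg (S t), hSb t]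
      nlinarith [hw_nonneg t]
  -- main estimate on the full weighted integral
  have main2 : (∫ t : ℝ, w t * ‖S t‖^2) ≤ Real.sqrt Real.pi * T * ∑' p : ℕ × ℕ, P p := by
    have hre : (fun t => w t * ‖S t‖^2)
        = fun t => (((w t : ℝ):ℂ) * (S t * (starRingEnd ℂ) (S t))).re := by
      funext t
      have h1 : S t * (starRingEnd ℂ) (S t) = ((‖S t‖^2 : ℝ) : ℂ) := by
        rw [Complex.mul_conj]
        norm_cast
        rw [Complex.normSq_eq_norm_sq]
      rw [h1, ← Complex.ofReal_mul, Complex.ofReal_re]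
    have h2 : (∫ t : ℝ, w t * ‖S t‖^2)
        = (∫ t : ℝ, ((w t : ℝ):ℂ) * (S t * (starRingEnd ℂ) (S t))).re := by
      rw [hre]
      exact integral_re hcplx_int
    have h3 : (∫ t : ℝ, ((w t : ℝ):ℂ) * (S t * (starRingEnd ℂ) (S t)))
        = ∑' p : ℕ × ℕ, ∫ t, F p t := by
      rw [← hswap]
      exact integral_congr_ae (Filter.Eventually.of_forall (fun t => (hprod t).symm))
    have hnormsum : Summable (fun p : ℕ × ℕ => ‖∫ t, F p t‖) := by
      apply Summable.congr (f := fun p : ℕ × ℕ => Real.sqrt Real.pi * T * P p)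
      · exact hPs.mul_left _
      · exact fun p => (hFint_val p).symm
    calc (∫ t : ℝ, w t * ‖S t‖^2)
        = (∑' p : ℕ × ℕ, ∫ t, F p t).re := by rw [h2, h3]
      _ ≤ ‖∑' p : ℕ × ℕ, ∫ t, F p t‖ := Complex.re_le_norm _
      _ ≤ ∑' p : ℕ × ℕ, ‖∫ t, F p t‖ := norm_tsum_le_tsum_norm hnormsum
      _ = ∑' p : ℕ × ℕ, Real.sqrt Real.pi * T * P p := tsum_congr hFint_val
      _ = Real.sqrt Real.pi * T * ∑' p : ℕ × ℕ, P p := tsum_mul_left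
  -- put everything together
  have hgoal : (∫ t in (-T)..T, ‖∑' n : ℕ, a n * ((n : ℂ) + 1) ^ ((t : ℂ) * Complex.I)‖ ^ 2)
      = ∫ t in (-T)..T, ‖S t‖^2 := by
    apply intervalIntegral.integral_congr
    intro t _
    show ‖∑' n : ℕ, a n * ((n : ℂ) + 1) ^ ((t : ℂ) * Complex.I)‖ ^ 2 = ‖S t‖ ^ 2
    have hst : (∑' n : ℕ, a n * ((n : ℂ) + 1) ^ ((t : ℂ) * Complex.I)) = S t := by
      rw [hS]
      exact tsum_congr (hterm t)
    rw [hst]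
  rw [hgoal]
  calc (∫ t in (-T)..T, ‖S t‖^2)
      ≤ Real.exp 1 * ∫ t : ℝ, w t * ‖S t‖^2 := stepA
    _ ≤ Real.exp 1 * (Real.sqrt Real.pi * T * ∑' p : ℕ × ℕ, P p) :=
        mul_le_mul_of_nonneg_left main2 (Real.exp_pos 1).le
    _ ≤ Real.exp 1 * (Real.sqrt Real.pi * T
        * (C0/T * ∑' n : ℕ, (T + ((n:ℝ)+1)) * ‖a n‖^2)) := by
        apply mul_le_mul_of_nonneg_left _ (Real.exp_pos 1).le
        apply mul_le_mul_of_nonneg_left htsumP (by positivity)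
    _ = Real.exp 1 * Real.sqrt Real.pi * C0 * ∑' n : ℕ, (T + ((n:ℝ)+1)) * ‖a n‖^2 := by
        field_simp
    _ = Real.exp 1 * Real.sqrt Real.pi * (4*Real.exp 1 + 17*Real.exp 8)
        * ∑' n : ℕ, (T + ((n:ℝ)+1)) * ‖a n‖^2 := by rw [hC0]
end

section
/- For real t with |t| ≥ 2, the function ψ₁(t) = (∂/∂s) log γ(s,t)|_{s=1/2}, where γ(s,t) = π^{−s}Γ((s−it)/2)Γ((s+it)/2), satisfies ψ₁(t) = log√(1/4 + t²) − log(2π) + O(1/t²), with an absolute implied constant. -/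
open Complex

/-- `ψ₁(t) = ∂/∂s log γ(s,t) |_{s = 1/2}`, the logarithmic derivative at
`s = 1/2` of `γ(s,t) = π^{-s} Γ((s-it)/2) Γ((s+it)/2)`. -/
noncomputable def psiOne (t : ℝ) : ℂ :=
  logDeriv (fun s : ℂ =>
    (Real.pi : ℂ) ^ (-s) * Complex.Gamma ((s - Complex.I * t) / 2) *
      Complex.Gamma ((s + Complex.I * t) / 2)) (1 / 2)

open Filter Finset Topology

noncomputable def dser (s : ℂ) (k : ℕ) : ℂ :=
  Complex.log (1 + (s + k)⁻¹) - (s + k)⁻¹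

noncomputable def psiAux (s : ℂ) : ℂ := Complex.log s + ∑' k, dser s k

lemma re_add_nat_pos {s : ℂ} (hs : 0 < s.re) (k : ℕ) : 0 < (s + k).re := by
  simp only [add_re, natCast_re]
  positivity

lemma add_nat_ne_zero {s : ℂ} (hs : 0 < s.re) (k : ℕ) : s + k ≠ 0 := by
  intro h
  have := re_add_nat_pos hs k
  rw [h] at this; simp at this

lemma norm_inv_add_nat_le {s : ℂ} (hs : 0 < s.re) (k : ℕ) :
    ‖(s + k)⁻¹‖ ≤ 1 / (s.re + k) := by
  rw [norm_inv, one_div]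
  apply inv_anti₀
  · positivity
  · calc s.re + k = (s + k).re := by simp
    _ ≤ |(s + k).re| := le_abs_self _
    _ ≤ ‖s + k‖ := Complex.abs_re_le_norm _

/-- log(z+1) = log z + log (1 + z⁻¹) for Re z > 0. -/
lemma log_add_one_eq {z : ℂ} (hz : 0 < z.re) :
    Complex.log (z + 1) = Complex.log z + Complex.log (1 + z⁻¹) := by
  have hz0 : z ≠ 0 := by intro h; rw [h] at hz; simp at hz
  have h1 : 0 < (1 + z⁻¹).re := by
    rw [add_re, one_re, inv_re]
    have := div_nonneg hz.le (normSq_nonneg z)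
    linarith
  have h10 : (1 : ℂ) + z⁻¹ ≠ 0 := by intro h; rw [h] at h1; simp at h1
  have : z + 1 = z * (1 + z⁻¹) := by field_simp
  rw [this, Complex.log_mul hz0 h10]
  rw [Set.mem_Ioc]
  have a1 : |arg z| < Real.pi / 2 := abs_arg_lt_pi_div_two_iff.2 (Or.inl hz)
  have a2 : |arg (1 + z⁻¹)| < Real.pi / 2 := abs_arg_lt_pi_div_two_iff.2 (Or.inl h1)
  rw [abs_lt] at a1 a2
  constructor <;> [linarith; linarith]

lemma norm_log_one_add_sub_self_le' {w : ℂ} (hw : ‖w‖ ≤ 1/2) :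
    ‖Complex.log (1 + w) - w‖ ≤ ‖w‖ ^ 2 := by
  have h1 : ‖w‖ < 1 := lt_of_le_of_lt hw (by norm_num)
  calc ‖Complex.log (1 + w) - w‖ ≤ ‖w‖ ^ 2 * (1 - ‖w‖)⁻¹ / 2 :=
        norm_log_one_add_sub_self_le h1
    _ ≤ ‖w‖ ^ 2 * 2 / 2 := by
        have h2 : (1 - ‖w‖)⁻¹ ≤ 2 := by
          rw [inv_le_comm₀ (by linarith) (by norm_num)]
          linarith
        have h3 : (0:ℝ) < (1 - ‖w‖)⁻¹ := inv_pos.mpr (by linarith)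
        have h4 : (0:ℝ) ≤ ‖w‖ ^ 2 := sq_nonneg _
        nlinarith
    _ = ‖w‖ ^ 2 := by ring

lemma summable_one_div_nat_sq : Summable (fun k : ℕ => 1 / (k : ℝ) ^ 2) := by
  simpa using Real.summable_one_div_nat_pow.mpr (le_refl 2)

lemma norm_dser_le {s : ℂ} (hs : 0 < s.re) {k : ℕ} (hk : 2 ≤ k) :
    ‖dser s k‖ ≤ 1 / (k : ℝ) ^ 2 := by
  have hk' : (2 : ℝ) ≤ (k : ℝ) := by exact_mod_cast hk
  have hw : ‖(s + k)⁻¹‖ ≤ 1 / (k : ℝ) := by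
    refine (norm_inv_add_nat_le hs k).trans ?_
    rw [div_le_div_iff₀ (by positivity) (by positivity)]
    nlinarith
  have h2 : ‖(s + k)⁻¹‖ ≤ 1 / 2 := hw.trans (by
    rw [div_le_div_iff₀ (by positivity) (by norm_num)]; linarith)
  calc ‖dser s k‖ ≤ ‖(s + k)⁻¹‖ ^ 2 := norm_log_one_add_sub_self_le' h2
    _ ≤ (1 / (k : ℝ)) ^ 2 := pow_le_pow_left₀ (norm_nonneg _) hw 2
    _ = 1 / (k : ℝ) ^ 2 := by rw [div_pow, one_pow]

lemma summable_dser {s : ℂ} (hs : 0 < s.re) : Summable (dser s) := by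
  refine Summable.of_norm_bounded_eventually (g := fun k : ℕ => 1 / (k : ℝ) ^ 2)
    summable_one_div_nat_sq ?_
  rw [Nat.cofinite_eq_atTop]
  filter_upwards [eventually_ge_atTop 2] with k hk using norm_dser_le hs hk

noncomputable def hseq (n : ℕ) (s : ℂ) : ℂ :=
  (Real.log n : ℂ) - ∑ k ∈ range (n + 1), (s + k)⁻¹

lemma sum_dser_eq {s : ℂ} (hs : 0 < s.re) (n : ℕ) :
    ∑ k ∈ range n, dser s k
      = Complex.log (s + n) - Complex.log s - ∑ k ∈ range n, (s + k)⁻¹ := by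
  have h : ∀ k ∈ range n, dser s k
      = (Complex.log (s + (k+1 : ℕ)) - Complex.log (s + k)) - (s + k)⁻¹ := by
    intro k _
    have h1 := log_add_one_eq (re_add_nat_pos hs k)
    simp only [dser]
    push_cast
    rw [← add_assoc, h1]
    ring
  rw [Finset.sum_congr rfl h, Finset.sum_sub_distrib,
    Finset.sum_range_sub (fun k => Complex.log (s + k))]
  simp

lemma tendsto_inv_add_nat {s : ℂ} (hs : 0 < s.re) :
    Tendsto (fun n : ℕ => (s + n)⁻¹) atTop (𝓝 0) := by
  rw [tendsto_zero_iff_norm_tendsto_zero]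
  refine squeeze_zero (fun n => norm_nonneg _) (fun n => norm_inv_add_nat_le hs n) ?_
  simp_rw [one_div]
  exact tendsto_inv_atTop_zero.comp (tendsto_atTop_add_const_left _ _ tendsto_natCast_atTop_atTop)

lemma tendsto_log_one_add_div_nat (s : ℂ) :
    Tendsto (fun n : ℕ => Complex.log (1 + s / n)) atTop (𝓝 0) := by
  have h1 : Tendsto (fun n : ℕ => 1 + s / n) atTop (𝓝 1) := by
    have h0 : Tendsto (fun n : ℕ => s / n) atTop (𝓝 0) := by
      rw [tendsto_zero_iff_norm_tendsto_zero]
      refine squeeze_zero (g := fun n : ℕ => ‖s‖ / n) (fun n => norm_nonneg _) (fun n => ?_) ?_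
      · exact le_of_eq (by rw [norm_div, Complex.norm_natCast])
      · exact Tendsto.div_atTop tendsto_const_nhds tendsto_natCast_atTop_atTop
    simpa using (tendsto_const_nhds (x := (1:ℂ))).add h0
  have h2 : ContinuousAt Complex.log 1 := continuousAt_clog (by simp [Complex.mem_slitPlane_iff])
  have := h2.tendsto.comp h1
  rw [Complex.log_one] at this
  exact this

lemma tendsto_hseq {s : ℂ} (hs : 0 < s.re) :
    Tendsto (fun n => hseq n s) atTop (𝓝 (psiAux s)) := by
  have key : ∀ n : ℕ, 1 ≤ n → hseq n s
      = (∑ k ∈ range n, dser s k) + Complex.log s - (s + n)⁻¹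
        - Complex.log (1 + s / n) := by
    intro n hn
    have hn0 : (0 : ℝ) < n := by exact_mod_cast hn
    have hlog : Complex.log (s + n) = (Real.log n : ℂ) + Complex.log (1 + s / n) := by
      have hnc : (n : ℂ) ≠ 0 := by
        exact_mod_cast (show (n:ℝ) ≠ 0 from hn0.ne')
      have hne : (1 : ℂ) + s / n ≠ 0 := by
        intro h
        have hsn : s = -(n : ℂ) := by
          field_simp at h
          linear_combination h
        rw [hsn] at hs
        simp only [neg_re, natCast_re] at hs
        linarith
      have : s + n = (n : ℝ) * (1 + s / n) := by
        push_cast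
        field_simp
        ring
      rw [this, Complex.log_ofReal_mul hn0 hne]
    have := sum_dser_eq hs n
    rw [hseq, Finset.sum_range_succ]
    rw [hlog] at this
    have h2 : ∑ k ∈ range n, (s+k)⁻¹
        = (Real.log n : ℂ) + Complex.log (1 + s/n) - Complex.log s
          - ∑ k ∈ range n, dser s k := by
      rw [eq_sub_iff_add_eq]
      linear_combination this
    rw [h2]; ring
  have lim : Tendsto (fun n : ℕ =>
      (∑ k ∈ range n, dser s k) + Complex.log s - (s + n)⁻¹
        - Complex.log (1 + s / n)) atTop (𝓝 (psiAux s)) := by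
    have t1 := (summable_dser hs).hasSum.tendsto_sum_nat
    have := ((t1.add (tendsto_const_nhds (x := Complex.log s))).sub
      (tendsto_inv_add_nat hs)).sub (tendsto_log_one_add_div_nat s)
    simpa [psiAux, add_comm] using this
  exact Tendsto.congr' (by filter_upwards [eventually_ge_atTop 1] with n hn using (key n hn).symm) lim

lemma tuon_shift {F : ℕ → ℂ → ℂ} {f : ℂ → ℂ} {A : Set ℂ}
    (h : TendstoUniformlyOn F f atTop A) :
    TendstoUniformlyOn (fun n => F (n + 1)) f atTop A := by
  intro v hv
  exact (tendsto_add_atTop_nat 1).eventually (h v hv)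

lemma re_pos_of_mem_ball {z₀ : ℂ} (h0 : 0 < z₀.re) {s : ℂ}
    (hs : s ∈ Metric.ball z₀ (z₀.re / 2)) : z₀.re / 2 < s.re := by
  rw [Metric.mem_ball, dist_eq_norm] at hs
  have h1 : |(s - z₀).re| ≤ ‖s - z₀‖ := Complex.abs_re_le_norm _
  rw [sub_re, abs_le] at h1
  linarith [h1.1]

lemma tendstoUniformlyOn_hseq {z₀ : ℂ} (h0 : 0 < z₀.re) :
    TendstoUniformlyOn (fun n s => hseq n s) psiAux atTop
      (Metric.ball z₀ (z₀.re / 2)) := by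
  set r := z₀.re / 2 with hr
  have hrpos : 0 < r := by positivity
  set F : ℕ → ℂ → ℂ := fun k s => (z₀ + k)⁻¹ - (s + k)⁻¹ with hF
  set u : ℕ → ℝ := fun k => r / ((z₀.re + k) * (r + k)) with hu
  have key : ∀ (k : ℕ), ∀ s ∈ Metric.ball z₀ r, ‖F k s‖ ≤ u k := by
    intro k s hs
    have hsre : r < s.re := re_pos_of_mem_ball h0 hs
    have hs0 : 0 < s.re := lt_trans hrpos hsre
    have hFeq : F k s = (s - z₀) * ((z₀ + k)⁻¹ * (s + k)⁻¹) := by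
      have h1 := add_nat_ne_zero h0 k
      have h2 := add_nat_ne_zero hs0 k
      simp only [hF]
      rw [inv_sub_inv h1 h2]
      rw [div_eq_mul_inv, mul_inv]
      ring_nf
    rw [hFeq, norm_mul, norm_mul]
    have hb1 : ‖s - z₀‖ ≤ r := by
      rw [Metric.mem_ball, dist_eq_norm] at hs
      exact hs.le
    have hb2 : ‖(z₀ + k)⁻¹‖ ≤ 1 / (z₀.re + k) := norm_inv_add_nat_le h0 k
    have hb3 : ‖(s + k)⁻¹‖ ≤ 1 / (r + k) := by
      refine (norm_inv_add_nat_le hs0 k).trans ?_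
      have c1 : (0:ℝ) < r + k := by positivity
      have c2 : (0:ℝ) < s.re + k := by positivity
      rw [div_le_div_iff₀ c2 c1]
      nlinarith
    calc ‖s - z₀‖ * (‖(z₀ + k)⁻¹‖ * ‖(s + k)⁻¹‖)
        ≤ r * (1 / (z₀.re + k) * (1 / (r + k))) := by
          refine mul_le_mul hb1 ?_ (by positivity) hrpos.le
          refine mul_le_mul hb2 hb3 (norm_nonneg _) (by positivity)
      _ = u k := by rw [hu]; field_simp
  have husum : Summable u := by
    refine Summable.of_norm_bounded_eventually (g := fun k : ℕ => r * (1 / (k:ℝ)^2))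
      (summable_one_div_nat_sq.mul_left r) ?_
    rw [Nat.cofinite_eq_atTop]
    filter_upwards [eventually_ge_atTop 1] with k hk
    have hk1 : (1:ℝ) ≤ k := by exact_mod_cast hk
    have c1 : (0:ℝ) < z₀.re + k := by positivity
    have c2 : (0:ℝ) < r + k := by positivity
    have hnn : (0:ℝ) ≤ u k := by rw [hu]; positivity
    rw [Real.norm_of_nonneg hnn, hu, div_le_iff₀ (by positivity)]
    have : (k:ℝ)^2 ≤ (z₀.re + k) * (r + k) := by nlinarith
    calc r = r * ((k:ℝ)^2 * ((k:ℝ)^2)⁻¹) := by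
            rw [mul_inv_cancel₀ (by positivity), mul_one]
      _ ≤ r * (1/(k:ℝ)^2) * ((z₀.re + k) * (r + k)) := by
          rw [mul_assoc]
          rw [one_div]
          rw [mul_le_mul_iff_of_pos_left hrpos]
          rw [mul_comm ((k:ℝ)^2)]
          exact mul_le_mul_of_nonneg_left this (by positivity)
  have htsum := tendstoUniformlyOn_tsum_nat husum key
  have hshift := tuon_shift htsum
  have hconst : TendstoUniformlyOn (fun n (_ : ℂ) => hseq n z₀)
      (fun _ => psiAux z₀) atTop (Metric.ball z₀ r) :=
    (tendsto_hseq h0).tendstoUniformlyOn_const _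
  have hadd := hconst.add hshift
  have hsummF : ∀ s ∈ Metric.ball z₀ r, Summable (fun k => F k s) := by
    intro s hs
    exact Summable.of_norm_bounded husum (fun k => key k s hs)
  refine (hadd.congr ?_).congr_right ?_
  · filter_upwards with n
    intro s hs
    simp only [Pi.add_apply, hseq, hF, Finset.sum_sub_distrib]
    ring
  · intro s hs
    simp only [Pi.add_apply]
    have hs0 : 0 < s.re := lt_trans hrpos (re_pos_of_mem_ball h0 hs)
    refine tendsto_nhds_unique ?_ (tendsto_hseq hs0)
    have t2 : Tendsto (fun n : ℕ => ∑ k ∈ range (n+1), F k s) atTop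
        (𝓝 (∑' k, F k s)) :=
      (hsummF s hs).hasSum.tendsto_sum_nat.comp (tendsto_add_atTop_nat 1)
    have := (tendsto_const_nhds (x := psiAux z₀) (f := atTop)).add t2
    refine Tendsto.congr ?_ ((tendsto_hseq h0).add t2)
    intro n
    simp only [hseq, hF, Finset.sum_sub_distrib]
    ring

lemma natc_succ_ne (k : ℕ) : ((k : ℂ) + 1) ≠ 0 := by
  intro h
  have h2 : ((k + 1 : ℕ) : ℂ) = 0 := by push_cast; linear_combination h
  exact Nat.succ_ne_zero k (by exact_mod_cast h2)

noncomputable def Lseq (n : ℕ) (s : ℂ) : ℂ :=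
  (s - 1) * (Real.log n : ℂ) + Complex.log ((n : ℂ) / (n + 1))
    - ∑ k ∈ range (n + 1), Complex.log (1 + (s - 1) / ((k : ℂ) + 1))

lemma one_add_div_eq (s : ℂ) (k : ℕ) :
    1 + (s - 1) / ((k : ℂ) + 1) = (s + k) / ((k : ℂ) + 1) := by
  have hk : ((k : ℂ) + 1) ≠ 0 := natc_succ_ne k
  field_simp
  ring

lemma re_one_add_div_pos {s : ℂ} (hs : 0 < s.re) (k : ℕ) :
    0 < (1 + (s - 1) / ((k : ℂ) + 1)).re := by
  rw [one_add_div_eq]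
  have h1 : ((k : ℂ) + 1) = (((k : ℝ) + 1 : ℝ) : ℂ) := by push_cast; ring
  rw [h1, div_eq_mul_inv, ← Complex.ofReal_inv, mul_comm, Complex.re_ofReal_mul]
  have h2 : (0:ℝ) < ((k:ℝ)+1)⁻¹ := by positivity
  have h3 := re_add_nat_pos hs k
  positivity

lemma one_add_div_ne_zero {s : ℂ} (hs : 0 < s.re) (k : ℕ) :
    1 + (s - 1) / ((k : ℂ) + 1) ≠ 0 := by
  intro h
  have := re_one_add_div_pos hs k
  rw [h] at this; simp at this

lemma hasDerivAt_Lseq {s : ℂ} (hs : 0 < s.re) (n : ℕ) :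
    HasDerivAt (Lseq n) (hseq n s) s := by
  have hterm : ∀ k ∈ range (n + 1),
      HasDerivAt (fun s : ℂ => Complex.log (1 + (s - 1) / ((k : ℂ) + 1)))
        ((s + k)⁻¹) s := by
    intro k _
    have hk : ((k : ℂ) + 1) ≠ 0 := natc_succ_ne k
    have hg : HasDerivAt (fun s : ℂ => 1 + (s - 1) / ((k : ℂ) + 1))
        (((k : ℂ) + 1)⁻¹) s := by
      have := (((hasDerivAt_id s).sub_const 1).div_const ((k : ℂ) + 1)).const_add 1
      simpa [one_div] using this
    have hmem : (1 + (s - 1) / ((k : ℂ) + 1)) ∈ Complex.slitPlane :=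
      Complex.mem_slitPlane_iff.2 (Or.inl (re_one_add_div_pos hs k))
    have := hg.clog hmem
    convert this using 1
    rw [one_add_div_eq]
    have hsk := add_nat_ne_zero hs k
    field_simp

  have hsum : HasDerivAt
      (fun s : ℂ => ∑ k ∈ range (n + 1), Complex.log (1 + (s - 1) / ((k : ℂ) + 1)))
      (∑ k ∈ range (n + 1), (s + k)⁻¹) s := HasDerivAt.fun_sum hterm
  have hlin : HasDerivAt (fun s : ℂ => (s - 1) * (Real.log n : ℂ)
      + Complex.log ((n : ℂ) / (n + 1))) ((Real.log n : ℂ)) s := by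
    have := (((hasDerivAt_id s).sub_const 1).mul_const ((Real.log n : ℝ) : ℂ)).add_const
      (Complex.log ((n : ℂ) / (n + 1)))
    simpa using this
  have := hlin.sub hsum
  exact this

lemma exp_Lseq {s : ℂ} (hs : 0 < s.re) {n : ℕ} (hn : 1 ≤ n) :
    Complex.exp (Lseq n s) = Complex.GammaSeq s n := by
  have hn0 : (n : ℂ) ≠ 0 := Nat.cast_ne_zero.2 (by omega)
  have hn1 : ((n : ℂ) + 1) ≠ 0 := natc_succ_ne n
  have hA : Complex.exp ((s - 1) * (Real.log n : ℂ)) = (n : ℂ) ^ (s - 1) := by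
    rw [Complex.cpow_def_of_ne_zero hn0]
    have : Complex.log (n : ℂ) = ((Real.log n : ℝ) : ℂ) := by
      rw [Complex.ofReal_log (Nat.cast_nonneg n)]
      norm_num
    rw [this, mul_comm]
  have hB : Complex.exp (Complex.log ((n : ℂ) / (n + 1))) = (n : ℂ) / (n + 1) :=
    Complex.exp_log (div_ne_zero hn0 hn1)
  have hC : Complex.exp (∑ k ∈ range (n + 1), Complex.log (1 + (s - 1) / ((k : ℂ) + 1)))
      = ∏ k ∈ range (n + 1), ((s + k) / ((k : ℂ) + 1)) := by
    rw [Complex.exp_sum]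
    refine Finset.prod_congr rfl fun k _ => ?_
    rw [Complex.exp_log (one_add_div_ne_zero hs k), one_add_div_eq]
  have hprod : ∏ k ∈ range (n + 1), ((s + k) / ((k : ℂ) + 1))
      = (∏ k ∈ range (n + 1), (s + k)) / ((Nat.factorial (n+1) : ℕ) : ℂ) := by
    rw [Finset.prod_div_distrib]
    congr 1
    have : ((Nat.factorial (n+1) : ℕ) : ℂ) = ∏ k ∈ range (n + 1), ((k : ℂ) + 1) := by
      rw [← Finset.prod_range_add_one_eq_factorial]
      push_cast
      rfl
    rw [this]
  have hPne : (∏ k ∈ range (n + 1), (s + k)) ≠ 0 :=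
    Finset.prod_ne_zero_iff.2 fun k _ => add_nat_ne_zero hs k
  have hfac : ((Nat.factorial (n+1) : ℕ) : ℂ) ≠ 0 := Nat.cast_ne_zero.2 (Nat.factorial_ne_zero _)
  have hfac' : ((Nat.factorial n : ℕ) : ℂ) ≠ 0 := Nat.cast_ne_zero.2 (Nat.factorial_ne_zero _)
  rw [Lseq, Complex.exp_sub, Complex.exp_add, hA, hB, hC, hprod, Complex.GammaSeq]
  have hpow : (n : ℂ) ^ (s - 1) = (n : ℂ) ^ s / (n : ℂ) := by
    rw [Complex.cpow_sub _ _ hn0, Complex.cpow_one]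
  rw [hpow]
  have hfacs : ((Nat.factorial (n+1) : ℕ) : ℂ) = ((n + 1 : ℂ)) * (Nat.factorial n : ℕ) := by
    rw [Nat.factorial_succ]
    push_cast
    ring
  rw [hfacs]
  field_simp

noncomputable def Tterm (s : ℂ) (k : ℕ) : ℂ :=
  Complex.log (1 + (s - 1) / ((k : ℂ) + 1)) - (s - 1) / ((k : ℂ) + 1)

lemma summable_Tterm (s : ℂ) : Summable (Tterm s) := by
  refine Summable.of_norm_bounded_eventually (g := fun k : ℕ => ‖s - 1‖^2 * (1 / (k:ℝ)^2))
    (summable_one_div_nat_sq.mul_left _) ?_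
  rw [Nat.cofinite_eq_atTop]
  have hbig : Tendsto (fun k : ℕ => ‖s - 1‖ / ((k:ℝ) + 1)) atTop (𝓝 0) := by
    refine Tendsto.div_atTop tendsto_const_nhds ?_
    exact tendsto_atTop_add_const_right _ _ tendsto_natCast_atTop_atTop
  have hev := hbig.eventually_le_const (show (0:ℝ) < 1/2 by norm_num)
  filter_upwards [hev, eventually_ge_atTop 1] with k hk hk1
  have hk1' : (1:ℝ) ≤ (k:ℝ) := by exact_mod_cast hk1
  have hknorm : ‖(s - 1) / ((k:ℂ) + 1)‖ = ‖s - 1‖ / ((k:ℝ) + 1) := by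
    rw [norm_div]
    congr 1
    have : ((k:ℂ) + 1) = (((k:ℝ) + 1 : ℝ) : ℂ) := by push_cast; ring
    rw [this, Complex.norm_real, Real.norm_eq_abs, _root_.abs_of_nonneg (by positivity)]
  have hb : ‖(s - 1) / ((k:ℂ) + 1)‖ ≤ 1/2 := by rw [hknorm]; exact hk
  calc ‖Tterm s k‖ ≤ ‖(s - 1) / ((k:ℂ) + 1)‖^2 := norm_log_one_add_sub_self_le' hb
    _ = (‖s - 1‖ / ((k:ℝ) + 1))^2 := by rw [hknorm]
    _ ≤ ‖s - 1‖^2 * (1 / (k:ℝ)^2) := by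
        rw [div_pow, div_le_iff₀ (by positivity : (0:ℝ) < ((k:ℝ)+1)^2)]
        have hk0 : (0:ℝ) < (k:ℝ)^2 := by nlinarith
        have e1 : ‖s-1‖^2 * (1/(k:ℝ)^2) * ((k:ℝ)+1)^2 = ‖s-1‖^2 * (((k:ℝ)+1)^2/(k:ℝ)^2) := by
          ring
        rw [e1]
        have e2 : (1:ℝ) ≤ ((k:ℝ)+1)^2/(k:ℝ)^2 := by
          rw [le_div_iff₀ hk0]; nlinarith
        nlinarith [sq_nonneg (‖s-1‖)]

noncomputable def LGamma (s : ℂ) : ℂ := (s - 1) * psiAux 1 - ∑' k, Tterm s k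

lemma tendsto_Lseq {s : ℂ} (hs : 0 < s.re) :
    Tendsto (fun n => Lseq n s) atTop (𝓝 (LGamma s)) := by
  have key : ∀ n : ℕ, Lseq n s
      = (s - 1) * hseq n 1 + Complex.log ((n : ℂ) / (n + 1))
        - ∑ k ∈ range (n + 1), Tterm s k := by
    intro n
    simp only [Lseq, hseq, Tterm, Finset.mul_sum, Finset.sum_sub_distrib, mul_sub]
    have : ∀ k ∈ range (n+1), (s-1) * (1 + (k:ℂ))⁻¹ = (s-1)/((k:ℂ)+1) := by
      intro k _
      rw [div_eq_mul_inv, add_comm 1 ((k:ℂ))]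
    rw [Finset.sum_congr rfl this]
    ring
  have t1 : Tendsto (fun n => (s - 1) * hseq n 1) atTop (𝓝 ((s - 1) * psiAux 1)) :=
    (tendsto_hseq (by norm_num : (0:ℝ) < (1:ℂ).re)).const_mul _
  have t2 : Tendsto (fun n : ℕ => Complex.log ((n : ℂ) / (n + 1))) atTop (𝓝 0) := by
    have h1 : Tendsto (fun n : ℕ => (n : ℂ) / (n + 1)) atTop (𝓝 1) := by
      have h0 : Tendsto (fun n : ℕ => ((1:ℂ) + n)⁻¹) atTop (𝓝 0) :=
        tendsto_inv_add_nat (by norm_num : (0:ℝ) < (1:ℂ).re)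
      have heq : ∀ n : ℕ, (n : ℂ) / (n + 1) = 1 - ((1:ℂ) + n)⁻¹ := by
        intro n
        have h1n : ((n:ℂ) + 1) ≠ 0 := natc_succ_ne n
        have h1n' : ((1:ℂ) + n) ≠ 0 := by rw [add_comm]; exact h1n
        field_simp
        ring
      have := (tendsto_const_nhds (x := (1:ℂ)) (f := atTop)).sub h0
      rw [sub_zero] at this
      exact Tendsto.congr (fun n => (heq n).symm) this
    have h2 : ContinuousAt Complex.log 1 := continuousAt_clog (by simp [Complex.mem_slitPlane_iff])
    have := h2.tendsto.comp h1
    rw [Complex.log_one] at this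
    exact this
  have t3 : Tendsto (fun n => ∑ k ∈ range (n + 1), Tterm s k) atTop (𝓝 (∑' k, Tterm s k)) :=
    (summable_Tterm s).hasSum.tendsto_sum_nat.comp (tendsto_add_atTop_nat 1)
  have := (t1.add t2).sub t3
  rw [add_zero] at this
  exact Tendsto.congr (fun n => (key n).symm) this

lemma gamma_eq_exp_LGamma {x : ℂ} (hx : 0 < x.re) :
    Complex.exp (LGamma x) = Complex.Gamma x := by
  have h1 : Tendsto (fun n => Complex.exp (Lseq n x)) atTop (𝓝 (Complex.exp (LGamma x))) :=
    (Complex.continuous_exp.continuousAt.tendsto).comp (tendsto_Lseq hx)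
  have h2 : Tendsto (fun n => Complex.exp (Lseq n x)) atTop (𝓝 (Complex.Gamma x)) := by
    refine Tendsto.congr' ?_ (Complex.GammaSeq_tendsto_Gamma x)
    filter_upwards [eventually_ge_atTop 1] with n hn
    exact (exp_Lseq hx hn).symm
  exact tendsto_nhds_unique h1 h2

lemma logDeriv_Gamma_eq {z : ℂ} (hz : 0 < z.re) :
    logDeriv Complex.Gamma z = psiAux z := by
  set B := Metric.ball z (z.re / 2) with hB
  have hrad : (0:ℝ) < z.re / 2 := by positivity
  have hmem : z ∈ B := Metric.mem_ball_self hrad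
  have hre : ∀ x ∈ B, 0 < x.re := fun x hx =>
    lt_trans hrad (re_pos_of_mem_ball hz hx)
  have hd : HasDerivAt LGamma (psiAux z) z := by
    refine hasDerivAt_of_tendstoLocallyUniformlyOn (f := Lseq) Metric.isOpen_ball
      (tendstoUniformlyOn_hseq hz).tendstoLocallyUniformlyOn ?_ ?_ hmem
    · filter_upwards with n x hx
      exact hasDerivAt_Lseq (hre x hx) n
    · exact fun x hx => tendsto_Lseq (hre x hx)
  have hGder : HasDerivAt Complex.Gamma (Complex.Gamma z * psiAux z) z := by
    have h1 : HasDerivAt (fun x => Complex.exp (LGamma x))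
        (Complex.exp (LGamma z) * psiAux z) z := hd.cexp
    rw [gamma_eq_exp_LGamma hz] at h1
    refine h1.congr_of_eventuallyEq ?_
    filter_upwards [Metric.isOpen_ball.mem_nhds hmem] with x hx
    exact (gamma_eq_exp_LGamma (hre x hx)).symm
  rw [logDeriv_apply, hGder.deriv, mul_comm,
    mul_div_assoc, div_self (Complex.Gamma_ne_zero_of_re_pos hz), mul_one]

lemma summable_inv_sq_add (u : ℝ) (hu : 1 ≤ |u|) :
    Summable (fun k : ℕ => ((k:ℝ)^2 + u^2)⁻¹) := by
  refine Summable.of_norm_bounded_eventually (g := fun k : ℕ => 1 / (k:ℝ)^2)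
    summable_one_div_nat_sq ?_
  rw [Nat.cofinite_eq_atTop]
  filter_upwards [eventually_ge_atTop 1] with k hk
  have hk1 : (1:ℝ) ≤ (k:ℝ) := by exact_mod_cast hk
  have h1 : (0:ℝ) < (k:ℝ)^2 := by nlinarith
  have h2 : (0:ℝ) < (k:ℝ)^2 + u^2 := by nlinarith
  rw [Real.norm_of_nonneg (by positivity), one_div]
  apply inv_anti₀ h1
  nlinarith

lemma tsum_inv_sq_add_le (u : ℝ) (hu : 1 ≤ |u|) :
    ∑' k : ℕ, ((k:ℝ)^2 + u^2)⁻¹ ≤ 4 / |u| := by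
  have hS := summable_inv_sq_add u hu
  have hu0 : (0:ℝ) < |u| := by linarith
  have hu2 : (0:ℝ) < u^2 := by nlinarith [_root_.sq_abs u]
  obtain ⟨m, hm1, hm3⟩ : ∃ m : ℕ, (|u| ≤ (m:ℝ) - 1) ∧ ((m:ℝ) ≤ 3 * |u|) := by
    refine ⟨⌈|u|⌉₊ + 1, ?_, ?_⟩
    · have := Nat.le_ceil |u|
      push_cast
      linarith
    · have := Nat.ceil_lt_add_one (le_of_lt hu0)
      push_cast
      linarith
  have hm1' : (1:ℝ) ≤ (m:ℝ) - 1 := le_trans hu hm1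
  have hhead : ∑ k ∈ range m, ((k:ℝ)^2 + u^2)⁻¹ ≤ m / u^2 := by
    calc ∑ k ∈ range m, ((k:ℝ)^2 + u^2)⁻¹ ≤ ∑ _k ∈ range m, (u^2)⁻¹ := by
          refine Finset.sum_le_sum fun k _ => ?_
          apply inv_anti₀ hu2
          nlinarith [sq_nonneg (k:ℝ)]
      _ = m / u^2 := by
          rw [Finset.sum_const, Finset.card_range, nsmul_eq_mul, div_eq_mul_inv]
  have htail : ∑' k : ℕ, (((k + m : ℕ):ℝ)^2 + u^2)⁻¹ ≤ (((m:ℝ) - 1))⁻¹ := by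
    set g : ℕ → ℝ := fun j => ((j:ℝ) + (m:ℝ) - 1)⁻¹ with hg
    refine Real.tsum_le_of_sum_range_le (fun k => by positivity) (fun n => ?_)
    have hterm : ∀ k : ℕ, (((k + m : ℕ):ℝ)^2 + u^2)⁻¹ ≤ g k - g (k+1) := by
      intro k
      have hck : (0:ℝ) ≤ (k:ℝ) := Nat.cast_nonneg k
      have hc1 : (0:ℝ) < (k:ℝ) + (m:ℝ) - 1 := by linarith
      have hc2 : (0:ℝ) < (k:ℝ) + (m:ℝ) := by linarith
      have hgk : g k - g (k+1) = (((k:ℝ) + (m:ℝ) - 1) * ((k:ℝ) + (m:ℝ)))⁻¹ := by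
        simp only [hg, Nat.cast_add, Nat.cast_one]
        rw [inv_sub_inv (by linarith) (by linarith)]
        rw [show (k:ℝ) + 1 + (m:ℝ) - 1 = (k:ℝ) + (m:ℝ) by ring]
        rw [show (k:ℝ) + (m:ℝ) - ((k:ℝ) + (m:ℝ) - 1) = 1 by ring]
        rw [one_div, mul_comm]
      rw [hgk]
      apply inv_anti₀ (by positivity)
      push_cast
      nlinarith [sq_nonneg u]
    calc ∑ k ∈ range n, (((k + m : ℕ):ℝ)^2 + u^2)⁻¹
        ≤ ∑ k ∈ range n, (g k - g (k+1)) := Finset.sum_le_sum fun k _ => hterm k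
      _ = g 0 - g n := Finset.sum_range_sub' g n
      _ ≤ g 0 := by
          have hgn : (0:ℝ) ≤ g n := by
            have : (0:ℝ) < (n:ℝ) + (m:ℝ) - 1 := by
              linarith [Nat.cast_nonneg (α := ℝ) n]
            simp only [hg]
            positivity
          linarith
      _ = ((m:ℝ) - 1)⁻¹ := by simp only [hg]; norm_num
  rw [← Summable.sum_add_tsum_nat_add m hS]
  have hminv : ((m:ℝ) - 1)⁻¹ ≤ 1 / |u| := by
    rw [inv_eq_one_div]
    exact div_le_div_of_nonneg_left (by norm_num) hu0 hm1
  have hmu2' : (m:ℝ) / u^2 ≤ 3 / |u| := by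
    rw [div_le_div_iff₀ hu2 hu0]
    calc (m:ℝ) * |u| ≤ 3 * |u| * |u| := mul_le_mul_of_nonneg_right hm3 hu0.le
      _ = 3 * u^2 := by rw [mul_assoc, ← _root_.sq_abs u]; ring
  calc ∑ k ∈ range m, ((k:ℝ)^2 + u^2)⁻¹ + ∑' k : ℕ, (((k + m:ℕ):ℝ)^2 + u^2)⁻¹
      ≤ (m:ℝ) / u^2 + ((m:ℝ) - 1)⁻¹ := add_le_add hhead htail
    _ ≤ 3 / |u| + 1 / |u| := add_le_add hmu2' hminv
    _ = 4 / |u| := by ring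

lemma dser_b_iden {y : ℂ} (hy : y ≠ 0) (h1w : 1 + y⁻¹ ≠ 0) :
    (Complex.log (1 + y⁻¹) - y⁻¹) + ((2 * y)⁻¹ - (2 * (y + 1))⁻¹)
      = (Complex.log (1 + y⁻¹) - Complex.logTaylor 3 y⁻¹)
        - (y⁻¹) ^ 3 / (2 * (1 + y⁻¹)) := by
  have hLT : Complex.logTaylor 3 y⁻¹ = y⁻¹ - (y⁻¹) ^ 2 / 2 := by
    simp [Complex.logTaylor, Finset.sum_range_succ]
    ring
  have hy1 : y + 1 ≠ 0 := by
    intro h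
    apply h1w
    rw [show (1 : ℂ) + y⁻¹ = (y + 1) / y by field_simp, h, zero_div]
  rw [hLT]
  generalize Complex.log (1 + y⁻¹) = L
  set v : ℂ := y⁻¹ with hv
  have hvne : v ≠ 0 := inv_ne_zero hy
  have hyv : y = v⁻¹ := by rw [hv, inv_inv]
  have h1v : (1 : ℂ) + v ≠ 0 := h1w
  have hvv : v⁻¹ + 1 ≠ 0 := by
    have : v⁻¹ + 1 = (1 + v) / v := by field_simp
    rw [this]
    exact div_ne_zero h1v hvne
  rw [hyv]
  field_simp
  ring

set_option maxHeartbeats 1000000 in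
lemma psi_est {u : ℝ} (hu : 1 ≤ |u|) :
    ‖psiAux ((1/4 : ℂ) + u * I) - Complex.log ((1/4 : ℂ) + u * I)
      + (2 * ((1/4 : ℂ) + u * I))⁻¹‖ ≤ 136 / u ^ 2 := by
  have hu0 : (0:ℝ) < |u| := by linarith
  have hu2 : (0:ℝ) < u^2 := by nlinarith [_root_.sq_abs u]
  set z : ℂ := (1/4 : ℂ) + u * I with hzdef
  have hzre : z.re = 1/4 := by simp [hzdef]
  have hzim : z.im = u := by simp [hzdef]
  have hz : 0 < z.re := by rw [hzre]; norm_num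
  have hnorm : ∀ k : ℕ, ((k:ℝ)^2 + u^2 ≤ ‖z + k‖^2 ∧ (17/16 : ℝ) ≤ ‖z + k‖^2)
      ∧ |u| ≤ ‖z + k‖ := by
    intro k
    have h1 : ‖z + k‖^2 = ((1/4 : ℝ) + k)^2 + u^2 := by
      rw [Complex.sq_norm, Complex.normSq_apply]
      simp only [Complex.add_re, Complex.add_im, Complex.natCast_re, Complex.natCast_im,
        hzre, hzim, add_zero]
      ring
    have hck : (0:ℝ) ≤ (k:ℝ) := Nat.cast_nonneg k
    have hu1 : (1:ℝ) ≤ u^2 := by nlinarith [_root_.sq_abs u]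
    refine ⟨⟨?_, ?_⟩, ?_⟩
    · rw [h1]; nlinarith
    · rw [h1]; nlinarith
    · have h2 : |(z + k).im| ≤ ‖z + k‖ := Complex.abs_im_le_norm _
      have h3 : (z + k).im = u := by
        simp only [Complex.add_im, Complex.natCast_im, hzim, add_zero]
      rw [h3] at h2
      exact h2
  set F : ℕ → ℂ := fun k => (2 * (z + k))⁻¹ with hF
  set b : ℕ → ℂ := fun k => F k - F (k + 1) with hb
  have hterm : ∀ k : ℕ, ‖dser z k + b k‖ ≤ 34 * (((k:ℝ)^2 + u^2)⁻¹ * |u|⁻¹) := by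
    intro k
    obtain ⟨⟨hn1, hn2⟩, hn3⟩ := hnorm k
    have hzk : z + k ≠ 0 := add_nat_ne_zero hz k
    set w : ℂ := (z + k)⁻¹ with hw
    have hwnorm : ‖w‖ = ‖z + k‖⁻¹ := by rw [hw, norm_inv]
    have hnorm_pos : (0:ℝ) < ‖z + k‖ := by
      have := norm_pos_iff.2 hzk
      exact this
    have hku2 : (0:ℝ) < (k:ℝ)^2 + u^2 := by nlinarith [sq_nonneg (k:ℝ)]
    have hw2 : ‖w‖^2 ≤ ((k:ℝ)^2 + u^2)⁻¹ := by
      rw [hwnorm, inv_pow]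
      apply inv_anti₀ hku2
      exact hn1
    have hw2' : ‖w‖^2 ≤ 16/17 := by
      rw [hwnorm, inv_pow]
      rw [show (16:ℝ)/17 = (17/16)⁻¹ by norm_num]
      exact inv_anti₀ (by norm_num) hn2
    have hwle : ‖w‖ ≤ 33/34 := by nlinarith [norm_nonneg w]
    have hw1 : ‖w‖ < 1 := lt_of_le_of_lt hwle (by norm_num)
    have h1w : (1:ℝ)/34 ≤ ‖1 + w‖ := by
      have h4 := norm_sub_norm_le (1 : ℂ) (-w)
      rw [sub_neg_eq_add, norm_neg, norm_one] at h4
      linarith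
    have h1wne : (1:ℂ) + w ≠ 0 := by
      intro h
      rw [h, norm_zero] at h1w
      linarith
    have hwu : ‖w‖ ≤ |u|⁻¹ := by
      rw [hwnorm]
      exact inv_anti₀ hu0 hn3
    have hcast : z + ((k + 1 : ℕ) : ℂ) = (z + k) + 1 := by push_cast; ring
    have hiden : dser z k + b k
        = (Complex.log (1 + w) - Complex.logTaylor 3 w) - w ^ 3 / (2 * (1 + w)) := by
      have hid := dser_b_iden hzk h1wne
      rw [dser, hb, hF]
      simp only [hcast]
      exact hid
    have hb1 : ‖Complex.log (1 + w) - Complex.logTaylor 3 w‖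
        ≤ ‖w‖^3 * (1 - ‖w‖)⁻¹ / 3 := by
      have := Complex.norm_log_sub_logTaylor_le 2 hw1
      norm_num at this ⊢
      exact this
    have hinb : (1 - ‖w‖)⁻¹ ≤ 34 := by
      rw [inv_le_comm₀ (by linarith) (by norm_num)]
      linarith
    have hb2 : ‖w^3 / (2 * (1 + w))‖ ≤ ‖w‖^3 * 17 := by
      have h2n : ‖(2:ℂ)‖ = 2 := by norm_num
      rw [norm_div, norm_pow, norm_mul, h2n, div_le_iff₀ (by nlinarith)]
      nlinarith [pow_nonneg (norm_nonneg w) 3]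
    have hw3 : ‖w‖^3 ≤ ((k:ℝ)^2 + u^2)⁻¹ * |u|⁻¹ := by
      calc ‖w‖^3 = ‖w‖^2 * ‖w‖ := by ring
        _ ≤ ((k:ℝ)^2 + u^2)⁻¹ * |u|⁻¹ := by
            apply mul_le_mul hw2 hwu (norm_nonneg w) (by positivity)
    calc ‖dser z k + b k‖
        ≤ ‖Complex.log (1 + w) - Complex.logTaylor 3 w‖ + ‖w^3 / (2 * (1 + w))‖ := by
          rw [hiden]; exact norm_sub_le _ _
      _ ≤ ‖w‖^3 * (1 - ‖w‖)⁻¹ / 3 + ‖w‖^3 * 17 := add_le_add hb1 hb2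
      _ ≤ ‖w‖^3 * 34 / 3 + ‖w‖^3 * 17 := by
          have := pow_nonneg (norm_nonneg w) 3
          gcongr
      _ ≤ 34 * ‖w‖^3 := by nlinarith [pow_nonneg (norm_nonneg w) 3]
      _ ≤ 34 * (((k:ℝ)^2 + u^2)⁻¹ * |u|⁻¹) := by linarith [hw3]
  -- summability
  have hBsum : Summable (fun k : ℕ => 34 * (((k:ℝ)^2 + u^2)⁻¹ * |u|⁻¹)) :=
    (((summable_inv_sq_add u hu).mul_right |u|⁻¹).mul_left 34)
  have S1 : Summable (fun k => dser z k + b k) :=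
    Summable.of_norm_bounded hBsum hterm
  have Sd := summable_dser hz
  have Sb : Summable b := by
    have := S1.sub Sd
    simpa using this
  -- tsum b
  have htb : ∑' k, b k = (2 * z)⁻¹ := by
    have h1 : Tendsto (fun n => ∑ k ∈ range n, b k) atTop (𝓝 ((2 * z)⁻¹)) := by
      have heq : ∀ n : ℕ, ∑ k ∈ range n, b k = F 0 - F n := fun n =>
        Finset.sum_range_sub' F n
      have h2 : Tendsto (fun n : ℕ => F n) atTop (𝓝 0) := by
        have h3 := (tendsto_inv_add_nat hz).const_mul (2⁻¹ : ℂ)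
        rw [mul_zero] at h3
        refine Tendsto.congr (fun n => ?_) h3
        rw [hF]
        simp only
        rw [mul_inv]
      have h4 : Tendsto (fun n : ℕ => F 0 - F n) atTop (𝓝 (F 0 - 0)) :=
        (tendsto_const_nhds (x := F 0)).sub h2
      rw [sub_zero] at h4
      have h5 : Tendsto (fun n => ∑ k ∈ range n, b k) atTop (𝓝 (F 0)) :=
        Tendsto.congr (fun n => (heq n).symm) h4
      have hF0 : F 0 = (2 * z)⁻¹ := by rw [hF]; simp
      rw [hF0] at h5
      exact h5
    exact tendsto_nhds_unique Sb.hasSum.tendsto_sum_nat h1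
  -- main identity
  have hmain : psiAux z - Complex.log z + (2 * z)⁻¹ = ∑' k, (dser z k + b k) := by
    rw [Sd.tsum_add Sb, htb, psiAux]
    ring
  rw [hmain]
  have hnormsum : Summable (fun k => ‖dser z k + b k‖) :=
    Summable.of_nonneg_of_le (fun k => norm_nonneg _) hterm hBsum
  calc ‖∑' k, (dser z k + b k)‖ ≤ ∑' k, ‖dser z k + b k‖ :=
        norm_tsum_le_tsum_norm hnormsum
    _ ≤ ∑' k : ℕ, 34 * (((k:ℝ)^2 + u^2)⁻¹ * |u|⁻¹) := Summable.tsum_le_tsum hterm hnormsum hBsum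
    _ = 34 * |u|⁻¹ * ∑' k : ℕ, ((k:ℝ)^2 + u^2)⁻¹ := by
        rw [tsum_mul_left]
        rw [show (fun k : ℕ => ((k:ℝ)^2 + u^2)⁻¹ * |u|⁻¹)
          = fun k : ℕ => |u|⁻¹ * ((k:ℝ)^2 + u^2)⁻¹ from funext fun k => mul_comm _ _]
        rw [tsum_mul_left]
        ring
    _ ≤ 34 * |u|⁻¹ * (4 / |u|) := by
        apply mul_le_mul_of_nonneg_left (tsum_inv_sq_add_le u hu) (by positivity)
    _ = 136 / u^2 := by
        have hne : |u| ≠ 0 := ne_of_gt hu0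
        have hu' : u ≠ 0 := fun h => by simp [h] at hu0
        rw [← _root_.sq_abs u]
        field_simp
        ring

lemma arg1_eq (t : ℝ) : ((1/2 : ℂ) - Complex.I * t) / 2
    = (1/4 : ℂ) + ((-(t/2) : ℝ) : ℂ) * I := by
  push_cast
  ring

lemma arg2_eq (t : ℝ) : ((1/2 : ℂ) + Complex.I * t) / 2
    = (1/4 : ℂ) + (((t/2) : ℝ) : ℂ) * I := by
  push_cast
  ring

lemma re_quarter_add (u : ℝ) : (0:ℝ) < ((1/4 : ℂ) + (u : ℂ) * I).re := by
  simp

lemma logDeriv_pi_pow : logDeriv (fun s : ℂ => (Real.pi : ℂ) ^ (-s)) (1/2)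
    = -(Real.log Real.pi : ℂ) := by
  have hπ0 : (Real.pi : ℂ) ≠ 0 := by
    simp [Real.pi_ne_zero]
  have hfun : (fun s : ℂ => (Real.pi : ℂ) ^ (-s))
      = fun s : ℂ => Complex.exp (-(Real.log Real.pi : ℂ) * s) := by
    funext s
    rw [Complex.cpow_def_of_ne_zero hπ0, ← Complex.ofReal_log Real.pi_pos.le]
    congr 1
    ring
  rw [hfun, logDeriv_apply]
  have hd : HasDerivAt (fun s : ℂ => Complex.exp (-(Real.log Real.pi : ℂ) * s))
      (Complex.exp (-(Real.log Real.pi : ℂ) * (1/2)) * (-(Real.log Real.pi : ℂ)))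
      (1/2) := by
    have h1 : HasDerivAt (fun s : ℂ => -(Real.log Real.pi : ℂ) * s)
        (-(Real.log Real.pi : ℂ)) (1/2) := by
      simpa using (hasDerivAt_id ((1:ℂ)/2)).const_mul (-(Real.log Real.pi : ℂ))
    exact h1.cexp
  rw [hd.deriv, mul_comm, mul_div_assoc, div_self (Complex.exp_ne_zero _), mul_one]

lemma diff_pi_pow : DifferentiableAt ℂ (fun s : ℂ => (Real.pi : ℂ) ^ (-s)) (1/2) := by
  have hπ0 : (Real.pi : ℂ) ≠ 0 := by
    simp [Real.pi_ne_zero]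
  have hfun : (fun s : ℂ => (Real.pi : ℂ) ^ (-s))
      = fun s : ℂ => Complex.exp (-(Real.log Real.pi : ℂ) * s) := by
    funext s
    rw [Complex.cpow_def_of_ne_zero hπ0, ← Complex.ofReal_log Real.pi_pos.le]
    congr 1
    ring
  rw [hfun]
  apply DifferentiableAt.cexp
  exact (differentiable_id.const_mul _).differentiableAt

lemma logDeriv_Gamma_affine (c : ℂ) (hc : 0 < ((1/2 + c)/2).re) :
    logDeriv (fun s : ℂ => Complex.Gamma ((s + c) / 2)) (1/2)
      = psiAux ((1/2 + c) / 2) * (1/2) := by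
  have hg : logDeriv (Complex.Gamma ∘ fun s : ℂ => (s + c) / 2) (1/2)
      = logDeriv Complex.Gamma ((1/2 + c)/2) * deriv (fun s : ℂ => (s + c) / 2) (1/2) := by
    apply logDeriv_comp
    · refine Complex.differentiableAt_Gamma _ fun m => ?_
      intro h
      have : ((1/2 + c)/2).re = (-(m:ℂ)).re := by rw [h]
      simp only [neg_re, natCast_re] at this
      have hm : (0:ℝ) ≤ m := Nat.cast_nonneg m
      rw [this] at hc
      linarith
    · exact ((differentiable_id.add_const c).div_const 2).differentiableAt
  have hder : deriv (fun s : ℂ => (s + c) / 2) (1/2) = 1/2 := by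
    have : HasDerivAt (fun s : ℂ => (s + c) / 2) (1/2) (1/2 : ℂ) := by
      simpa using ((hasDerivAt_id ((1:ℂ)/2)).add_const c).div_const 2
    exact this.deriv
  rw [show (fun s : ℂ => Complex.Gamma ((s + c) / 2))
    = Complex.Gamma ∘ (fun s : ℂ => (s + c) / 2) from rfl, hg, hder,
    logDeriv_Gamma_eq hc]

lemma psiOne_eq (t : ℝ) :
    psiOne t = -(Real.log Real.pi : ℂ)
      + psiAux ((1/4 : ℂ) + ((-(t/2) : ℝ) : ℂ) * I) * (1/2)
      + psiAux ((1/4 : ℂ) + (((t/2) : ℝ) : ℂ) * I) * (1/2) := by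
  have h1re : 0 < (((1:ℂ)/2 + -(Complex.I * t))/2).re := by
    rw [show ((1:ℂ)/2 + -(Complex.I * t))/2 = (1/4 : ℂ) + ((-(t/2) : ℝ) : ℂ) * I by
      push_cast; ring]
    exact re_quarter_add _
  have h2re : 0 < (((1:ℂ)/2 + Complex.I * t)/2).re := by
    rw [show ((1:ℂ)/2 + Complex.I * t)/2 = (1/4 : ℂ) + (((t/2) : ℝ) : ℂ) * I by
      push_cast; ring]
    exact re_quarter_add _
  have hπ0 : (Real.pi : ℂ) ^ (-(1/2 : ℂ)) ≠ 0 := by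
    rw [Complex.cpow_def_of_ne_zero (by simp [Real.pi_ne_zero])]
    exact Complex.exp_ne_zero _
  have hG1ne : Complex.Gamma (((1:ℂ)/2 - Complex.I * t)/2) ≠ 0 := by
    apply Complex.Gamma_ne_zero_of_re_pos
    rw [show ((1:ℂ)/2 - Complex.I * t)/2 = ((1:ℂ)/2 + -(Complex.I * t))/2 by ring]
    exact h1re
  have hG2ne : Complex.Gamma (((1:ℂ)/2 + Complex.I * t)/2) ≠ 0 :=
    Complex.Gamma_ne_zero_of_re_pos h2re
  have hdiffG : ∀ c : ℂ, 0 < (((1:ℂ)/2 + c)/2).re →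
      DifferentiableAt ℂ (fun s : ℂ => Complex.Gamma ((s + c) / 2)) (1/2) := by
    intro c hc
    refine DifferentiableAt.comp _ ?_ ?_
    · refine Complex.differentiableAt_Gamma _ fun m => ?_
      intro h
      have : (((1:ℂ)/2 + c)/2).re = (-(m:ℂ)).re := by rw [h]
      simp only [neg_re, natCast_re] at this
      have hm : (0:ℝ) ≤ m := Nat.cast_nonneg m
      rw [this] at hc
      linarith
    · exact ((differentiable_id.add_const c).div_const 2).differentiableAt
  have hd1 : DifferentiableAt ℂ (fun s : ℂ => Complex.Gamma ((s - Complex.I * t) / 2))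
      (1/2) := by
    have := hdiffG (-(Complex.I * t)) h1re
    simpa [sub_eq_add_neg] using this
  have hd2 : DifferentiableAt ℂ (fun s : ℂ => Complex.Gamma ((s + Complex.I * t) / 2))
      (1/2) := hdiffG (Complex.I * t) h2re
  have hsplit : psiOne t
      = logDeriv (fun s : ℂ => (Real.pi : ℂ) ^ (-s)
          * Complex.Gamma ((s - Complex.I * t) / 2)) (1/2)
        + logDeriv (fun s : ℂ => Complex.Gamma ((s + Complex.I * t) / 2)) (1/2) := by
    rw [psiOne]
    apply logDeriv_mul
    · exact mul_ne_zero hπ0 hG1ne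
    · exact hG2ne
    · exact diff_pi_pow.mul hd1
    · exact hd2
  have hsplit2 : logDeriv (fun s : ℂ => (Real.pi : ℂ) ^ (-s)
        * Complex.Gamma ((s - Complex.I * t) / 2)) (1/2)
      = logDeriv (fun s : ℂ => (Real.pi : ℂ) ^ (-s)) (1/2)
        + logDeriv (fun s : ℂ => Complex.Gamma ((s - Complex.I * t) / 2)) (1/2) :=
    logDeriv_mul _ hπ0 hG1ne diff_pi_pow hd1
  have hA1 : logDeriv (fun s : ℂ => Complex.Gamma ((s - Complex.I * t) / 2)) (1/2)
      = psiAux ((1/4 : ℂ) + ((-(t/2) : ℝ) : ℂ) * I) * (1/2) := by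
    have heq : (fun s : ℂ => Complex.Gamma ((s - Complex.I * t) / 2))
        = fun s : ℂ => Complex.Gamma ((s + -(Complex.I * t)) / 2) := by
      funext s
      rw [sub_eq_add_neg]
    rw [heq, logDeriv_Gamma_affine _ h1re]
    congr 2
    push_cast
    ring
  have hA2 : logDeriv (fun s : ℂ => Complex.Gamma ((s + Complex.I * t) / 2)) (1/2)
      = psiAux ((1/4 : ℂ) + (((t/2) : ℝ) : ℂ) * I) * (1/2) := by
    rw [logDeriv_Gamma_affine _ h2re]
    congr 2
    push_cast
    ring
  rw [hsplit, hsplit2, hA1, hA2, logDeriv_pi_pow]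

/-- For `|t| ≥ 2`, `ψ₁(t) = log √(1/4 + t²) - log 2π + O(1/t²)` with an
absolute implied constant. -/
theorem psiOne_asymptotic :
    ∃ C : ℝ, ∀ t : ℝ, 2 ≤ |t| →
      ‖psiOne t - ((Real.log (Real.sqrt (1 / 4 + t ^ 2)) : ℂ) -
          (Real.log (2 * Real.pi) : ℂ))‖ ≤ C / t ^ 2 := by
  refine ⟨545, fun t ht => ?_⟩
  have ht0 : (0:ℝ) < |t| := by linarith
  have htne : t ≠ 0 := fun h => by simp [h] at ht0
  have ht2 : (0:ℝ) < t^2 := by positivity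
  have hu : (1:ℝ) ≤ |t/2| := by rw [abs_div]; rw [abs_of_pos (by norm_num : (0:ℝ) < 2)]; linarith
  have hu' : (1:ℝ) ≤ |-(t/2)| := by rwa [abs_neg]
  set zp : ℂ := (1/4 : ℂ) + (((t/2) : ℝ) : ℂ) * I with hzp
  set zm : ℂ := (1/4 : ℂ) + ((-(t/2) : ℝ) : ℂ) * I with hzm
  have hzpre : zp.re = 1/4 := by simp [hzp]
  have hzpim : zp.im = t/2 := by simp [hzp]
  have hEp := psi_est hu
  have hEm := psi_est hu'
  rw [← hzp] at hEp
  rw [← hzm] at hEm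
  rw [neg_sq] at hEm
  -- conjugation facts
  have hconj : zm = (starRingEnd ℂ) zp := by
    simp only [hzp, hzm, map_add, map_mul, map_div₀, map_one, map_ofNat,
      Complex.conj_I, Complex.conj_ofReal]
    push_cast
    ring
  have hargp : zp.arg ≠ Real.pi := by
    intro h
    rw [Complex.arg_eq_pi_iff] at h
    rw [hzpre] at h
    linarith [h.1]
  have hlogconj : Complex.log zm = (starRingEnd ℂ) (Complex.log zp) := by
    rw [hconj, Complex.log_conj _ hargp]
  have cL : Complex.log zm + Complex.log zp
      = 2 * ((Real.log (‖zp‖) : ℝ) : ℂ) := by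
    rw [hlogconj, add_comm, Complex.add_conj, Complex.log_re]
    push_cast
    ring
  set c : ℝ := (zp⁻¹).re with hc
  have cI : zm⁻¹ + zp⁻¹ = 2 * ((c : ℝ) : ℂ) := by
    rw [hconj, ← map_inv₀, add_comm, Complex.add_conj, hc]
    push_cast
    ring
  have hnormSq : Complex.normSq zp = 1/16 + (t/2)^2 := by
    rw [Complex.normSq_apply, hzpre, hzpim]
    ring
  have hcval : c = (1/4) / (1/16 + (t/2)^2) := by
    rw [hc, Complex.inv_re, hnormSq, hzpre]
  have hcbound : |c| ≤ 1 / t^2 := by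
    rw [hcval, _root_.abs_of_nonneg (by positivity)]
    rw [div_le_div_iff₀ (by positivity) ht2]
    nlinarith
  -- abs zp
  have habs : Real.log (‖zp‖)
      = Real.log (Real.sqrt (1/4 + t^2)) - Real.log 2 := by
    have h1 : ‖zp‖ = Real.sqrt (1/16 + (t/2)^2) := by
      rw [Complex.norm_def, hnormSq]
    have h2 : (1/16 + (t/2)^2 : ℝ) = (1/4 + t^2)/4 := by ring
    have h3 : Real.sqrt ((1/4 + t^2)/4) = Real.sqrt (1/4 + t^2) / 2 := by
      rw [eq_div_iff (two_ne_zero)]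
      rw [show (2:ℝ) = Real.sqrt 4 by
        rw [show (4:ℝ) = 2^2 by norm_num, Real.sqrt_sq (by norm_num : (0:ℝ) ≤ 2)]]
      rw [← Real.sqrt_mul (by positivity)]
      congr 1
      ring
    rw [h1, h2, h3]
    rw [Real.log_div (ne_of_gt (Real.sqrt_pos.2 (by positivity))) two_ne_zero]
  have cB : ((Real.log (2 * Real.pi) : ℝ) : ℂ)
      = ((Real.log 2 : ℝ) : ℂ) + ((Real.log Real.pi : ℝ) : ℂ) := by
    rw [Real.log_mul two_ne_zero Real.pi_ne_zero]
    push_cast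
    ring
  have c2m : (2 * zm)⁻¹ = zm⁻¹ * (1/2 : ℂ) := by rw [mul_inv]; ring
  have c2p : (2 * zp)⁻¹ = zp⁻¹ * (1/2 : ℂ) := by rw [mul_inv]; ring
  have cLA : ((Real.log (‖zp‖) : ℝ) : ℂ)
      = ((Real.log (Real.sqrt (1/4 + t^2)) : ℝ) : ℂ) - ((Real.log 2 : ℝ) : ℂ) := by
    rw [habs]
    push_cast
    ring
  have key : psiOne t - ((Real.log (Real.sqrt (1 / 4 + t ^ 2)) : ℂ) -
        (Real.log (2 * Real.pi) : ℂ))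
      = (psiAux zm - Complex.log zm + (2 * zm)⁻¹) * (1/2)
        + (psiAux zp - Complex.log zp + (2 * zp)⁻¹) * (1/2)
        - ((c : ℝ) : ℂ) / 2 := by
    rw [psiOne_eq t, ← hzp, ← hzm]
    linear_combination (1/2 : ℂ) * cL + (1/2 : ℂ) * cLA * 2 - (1/2 : ℂ) * c2m
      - (1/2 : ℂ) * c2p - (1/4 : ℂ) * cI + cB
  rw [key]
  have hb1 : ‖(psiAux zm - Complex.log zm + (2 * zm)⁻¹) * (1/2 : ℂ)‖ ≤ 272 / t^2 := by
    rw [norm_mul]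
    have h12 : ‖(1/2 : ℂ)‖ = 1/2 := by norm_num
    rw [h12]
    have h4 : (136 : ℝ) / (t/2)^2 = 544 / t^2 := by
      field_simp
      ring
    rw [h4] at hEm
    have h5 : (544:ℝ)/t^2 = 2 * (272/t^2) := by ring
    linarith
  have hb2 : ‖(psiAux zp - Complex.log zp + (2 * zp)⁻¹) * (1/2 : ℂ)‖ ≤ 272 / t^2 := by
    rw [norm_mul]
    have h12 : ‖(1/2 : ℂ)‖ = 1/2 := by norm_num
    rw [h12]
    have h4 : (136 : ℝ) / (t/2)^2 = 544 / t^2 := by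
      field_simp
      ring
    rw [h4] at hEp
    have h5 : (544:ℝ)/t^2 = 2 * (272/t^2) := by ring
    linarith
  have hb3 : ‖((c : ℝ) : ℂ) / 2‖ ≤ 1 / (2 * t^2) := by
    rw [norm_div]
    have h2 : ‖(2 : ℂ)‖ = 2 := by norm_num
    rw [h2, Complex.norm_real, Real.norm_eq_abs]
    rw [div_le_div_iff₀ (by norm_num) (by positivity)]
    calc |c| * (2 * t^2) ≤ (1/t^2) * (2 * t^2) := by
          apply mul_le_mul_of_nonneg_right hcbound (by positivity)
      _ = 2 := by field_simp
      _ ≤ 1 * 2 := by norm_num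
  calc ‖(psiAux zm - Complex.log zm + (2 * zm)⁻¹) * (1/2 : ℂ)
        + (psiAux zp - Complex.log zp + (2 * zp)⁻¹) * (1/2 : ℂ) - ((c : ℝ) : ℂ) / 2‖
      ≤ ‖(psiAux zm - Complex.log zm + (2 * zm)⁻¹) * (1/2 : ℂ)
        + (psiAux zp - Complex.log zp + (2 * zp)⁻¹) * (1/2 : ℂ)‖ + ‖((c : ℝ) : ℂ) / 2‖ :=
        norm_sub_le _ _
    _ ≤ ‖(psiAux zm - Complex.log zm + (2 * zm)⁻¹) * (1/2 : ℂ)‖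
        + ‖(psiAux zp - Complex.log zp + (2 * zp)⁻¹) * (1/2 : ℂ)‖ + ‖((c : ℝ) : ℂ) / 2‖ := by
        gcongr
        exact norm_add_le _ _
    _ ≤ 272 / t^2 + 272 / t^2 + 1 / (2 * t^2) := by
        gcongr
    _ = (1089/2) / t^2 := by ring
    _ ≤ 545 / t^2 := by
        gcongr
        norm_num
end
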